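/- arXiv:1108.3008 — 8 statements merged into one kernel-verified Lean document; each statement's English description precedes it below -/
import Mathlib

section
/- For every q > 0 the equation ψ(z) = q has a unique solution ζ₀ in (0, ∞); this solution is a simple root, i.e. the derivative of ψ along the reals satisfies ψ'(ζ₀) > 0; and moreover every z ∈ ℂ with Re z ≥ 0 and ψ(z) = q satisfies Re z ≥ ζ₀. -/
open MeasureTheory Complex

namespace Stmt0Aux

lemma exp_ub (u : ℝ) : |Real.exp u - 1| ≤ |u| * Real.exp |u| := by
  rcases le_or_gt 0 u with h | h
  · rw [_root_.abs_of_nonneg h,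
      _root_.abs_of_nonneg (by linarith [Real.one_le_exp h] : (0:ℝ) ≤ Real.exp u - 1)]
    have h2 := Real.add_one_le_exp (-u)
    rw [Real.exp_neg] at h2
    have hp := Real.exp_pos u
    have h3 : (-u+1) * Real.exp u ≤ (Real.exp u)⁻¹ * Real.exp u :=
      mul_le_mul_of_nonneg_right h2 hp.le
    rw [inv_mul_cancel₀ hp.ne'] at h3
    nlinarith
  · rw [_root_.abs_of_neg h,
      _root_.abs_of_nonpos (by
        have := Real.exp_le_exp.mpr h.le
        rw [Real.exp_zero] at this
        linarith : Real.exp u - 1 ≤ 0)]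
    have h1 := Real.add_one_le_exp u
    have h2 := Real.one_le_exp (by linarith : (0:ℝ) ≤ -u)
    nlinarith [mul_nonneg (by linarith : (0:ℝ) ≤ -u) (by linarith : (0:ℝ) ≤ Real.exp (-u) - 1)]

lemma quarter_sq_le_exp (u : ℝ) (hu : 0 ≤ u) : u^2/4 ≤ Real.exp u := by
  have h := Real.add_one_le_exp (u/2)
  have h2 : Real.exp u = Real.exp (u/2) * Real.exp (u/2) := by
    rw [← Real.exp_add]; ring_nf
  nlinarith [Real.exp_pos (u/2)]

noncomputable def G (z : ℂ) (s : ℝ) : ℂ :=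
  Complex.exp (z * (s : ℂ)) - 1 - (if |s| ≤ 1 then z * (s : ℂ) else 0)

noncomputable def gR (x s : ℝ) : ℝ :=
  Real.exp (x * s) - 1 - (if |s| ≤ 1 then x * s else 0)

noncomputable def gR' (x s : ℝ) : ℝ :=
  s * Real.exp (x * s) - (if |s| ≤ 1 then s else 0)

lemma G_ofReal (x s : ℝ) : G (x : ℂ) s = ((gR x s : ℝ) : ℂ) := by
  unfold G gR
  push_cast
  split_ifs <;> simp

lemma G_re (z : ℂ) (s : ℝ) :
    (G z s).re = (Complex.exp (z * (s:ℂ))).re - 1 - (if |s| ≤ 1 then z.re * s else 0) := by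
  unfold G
  simp [apply_ite Complex.re, Complex.mul_re]

lemma G_meas (z : ℂ) : Measurable (G z) := by
  unfold G
  refine (((Complex.measurable_exp.comp (Complex.measurable_ofReal.const_mul z)).sub
    measurable_const).sub ?_)
  exact Measurable.ite (measurableSet_le (_root_.continuous_abs.measurable) measurable_const)
    (Complex.measurable_ofReal.const_mul z) measurable_const

lemma gR_meas (x : ℝ) : Measurable (gR x) := by
  unfold gR
  refine ((Real.measurable_exp.comp (measurable_id.const_mul x)).sub measurable_const).sub ?_
  exact Measurable.ite (measurableSet_le (_root_.continuous_abs.measurable) measurable_const)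
    (measurable_id.const_mul x) measurable_const

lemma gR'_meas (x : ℝ) : Measurable (gR' x) := by
  unfold gR'
  refine (measurable_id.mul (Real.measurable_exp.comp (measurable_id.const_mul x))).sub ?_
  exact Measurable.ite (measurableSet_le (_root_.continuous_abs.measurable) measurable_const)
    measurable_id measurable_const

lemma norm_G_le {k : ℝ} (z : ℂ) (hz : 0 ≤ z.re) {s : ℝ} (hs : s ≤ k) :
    ‖G z s‖ ≤ (3 * Real.exp ‖z‖ * ‖z‖^2 + (Real.exp (z.re * k) + 1)) * min 1 (s^2) := by
  have hzn : 0 ≤ ‖z‖ := norm_nonneg z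
  have he1 : (1:ℝ) ≤ Real.exp ‖z‖ := Real.one_le_exp hzn
  have hek : (0:ℝ) < Real.exp (z.re * k) := Real.exp_pos _
  have hres : (z * (s:ℂ)).re = z.re * s := by simp [Complex.mul_re]
  have hnormzs : ‖z * (s:ℂ)‖ = ‖z‖ * |s| := by
    rw [norm_mul, Complex.norm_real, Real.norm_eq_abs]
  have hexp_norm : ‖Complex.exp (z * (s:ℂ))‖ = Real.exp (z.re * s) := by
    rw [Complex.norm_exp, hres]
  have hrs : z.re * s ≤ z.re * k := mul_le_mul_of_nonneg_left hs hz
  by_cases hs1 : |s| ≤ 1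
  · have hmin : min 1 (s^2) = s^2 := min_eq_right (by nlinarith [abs_nonneg s, _root_.sq_abs s])
    rw [hmin]
    unfold G
    rw [if_pos hs1]
    by_cases hzs : ‖z * (s:ℂ)‖ ≤ 1
    · have hb := Complex.norm_exp_sub_one_sub_id_le (x := z * (s:ℂ)) hzs
      have heq : ‖z * (s:ℂ)‖^2 = ‖z‖^2 * s^2 := by
        rw [hnormzs, mul_pow, _root_.sq_abs]
      rw [heq] at hb
      nlinarith [sq_nonneg s, sq_nonneg ‖z‖, sq_nonneg (‖z‖*s)]
    · push_neg at hzs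
      have htri : ‖Complex.exp (z * (s:ℂ)) - 1 - z * (s:ℂ)‖ ≤
          Real.exp (z.re * s) + 1 + ‖z‖ * |s| := by
        calc ‖Complex.exp (z * (s:ℂ)) - 1 - z * (s:ℂ)‖
            ≤ ‖Complex.exp (z * (s:ℂ)) - 1‖ + ‖z * (s:ℂ)‖ := norm_sub_le _ _
          _ ≤ ‖Complex.exp (z * (s:ℂ))‖ + ‖(1:ℂ)‖ + ‖z * (s:ℂ)‖ := by
              gcongr; exact norm_sub_le _ _
          _ = Real.exp (z.re * s) + 1 + ‖z‖ * |s| := by rw [hexp_norm, hnormzs, norm_one]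
      have h1a : |z.re| ≤ ‖z‖ := Complex.abs_re_le_norm z
      have h1 : z.re * s ≤ ‖z‖ := by
        calc z.re * s ≤ |z.re * s| := le_abs_self _
          _ = |z.re| * |s| := abs_mul _ _
          _ ≤ ‖z‖ * |s| := mul_le_mul_of_nonneg_right h1a (abs_nonneg s)
          _ ≤ ‖z‖ * 1 := mul_le_mul_of_nonneg_left hs1 hzn
          _ = ‖z‖ := mul_one _
      have h2 : Real.exp (z.re * s) ≤ Real.exp ‖z‖ := Real.exp_le_exp.mpr h1
      have h3 : ‖z‖ * |s| ≤ ‖z‖ := by nlinarith [abs_nonneg s]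
      have h4 : ‖z‖ ≤ Real.exp ‖z‖ := by nlinarith [Real.add_one_le_exp ‖z‖]
      have h5 : (1:ℝ) < ‖z‖^2 * s^2 := by
        have h5a : 1 < ‖z‖ * |s| := hnormzs ▸ hzs
        nlinarith [abs_nonneg s, _root_.sq_abs s]
      nlinarith [sq_nonneg s]
  · have hs1' : 1 < |s| := lt_of_not_ge hs1
    have hmin : min 1 (s^2) = 1 := min_eq_left (by nlinarith [_root_.sq_abs s])
    rw [hmin, mul_one]
    unfold G
    rw [if_neg hs1]
    have htri : ‖Complex.exp (z * (s:ℂ)) - 1 - 0‖ ≤ Real.exp (z.re * s) + 1 := by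
      rw [sub_zero]
      calc ‖Complex.exp (z * (s:ℂ)) - 1‖ ≤ ‖Complex.exp (z * (s:ℂ))‖ + ‖(1:ℂ)‖ := norm_sub_le _ _
        _ = Real.exp (z.re * s) + 1 := by rw [hexp_norm, norm_one]
    have h2 : Real.exp (z.re * s) ≤ Real.exp (z.re * k) := Real.exp_le_exp.mpr hrs
    nlinarith [mul_nonneg (mul_nonneg (by norm_num : (0:ℝ) ≤ 3) (Real.exp_pos ‖z‖).le) (sq_nonneg ‖z‖)]

lemma gR'_bound {k c X x s : ℝ} (hk : 0 < k) (hc : 0 < c) (hx1 : c ≤ x) (hx2 : x ≤ X)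
    (hs : s ≤ k) :
    |gR' x s| ≤ (X * Real.exp X + 1/c + k * Real.exp (X * k)) * min 1 (s^2) := by
  have hX : 0 < X := lt_of_lt_of_le hc (hx1.trans hx2)
  have hx0 : 0 < x := lt_of_lt_of_le hc hx1
  have hrest : 0 < 1/c + k * Real.exp (X*k) :=
    add_pos (one_div_pos.mpr hc) (mul_pos hk (Real.exp_pos _))
  unfold gR'
  by_cases hs1 : |s| ≤ 1
  · have hmin : min 1 (s^2) = s^2 := min_eq_right (by nlinarith [abs_nonneg s, _root_.sq_abs s])
    rw [hmin, if_pos hs1]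
    have h1 : |s * Real.exp (x*s) - s| = |s| * |Real.exp (x*s) - 1| := by
      rw [← abs_mul]; ring_nf
    have h2 : |Real.exp (x*s) - 1| ≤ |x*s| * Real.exp |x*s| := exp_ub (x*s)
    have h3 : |x*s| = x * |s| := by rw [abs_mul, _root_.abs_of_pos hx0]
    have h4 : |x*s| ≤ X := by rw [h3]; nlinarith [abs_nonneg s]
    have h5 : Real.exp |x*s| ≤ Real.exp X := Real.exp_le_exp.mpr h4
    have hmain : x * Real.exp |x*s| ≤ X * Real.exp X :=
      mul_le_mul hx2 h5 (Real.exp_pos _).le hX.le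
    calc |s * Real.exp (x*s) - s| = |s| * |Real.exp (x*s) - 1| := h1
      _ ≤ |s| * (|x*s| * Real.exp |x*s|) := mul_le_mul_of_nonneg_left h2 (abs_nonneg s)
      _ = (x * Real.exp |x*s|) * s^2 := by rw [h3, ← _root_.sq_abs s]; ring
      _ ≤ (X * Real.exp X) * s^2 := mul_le_mul_of_nonneg_right hmain (sq_nonneg s)
      _ ≤ (X * Real.exp X + 1/c + k * Real.exp (X*k)) * s^2 := by nlinarith [sq_nonneg s]
  · have hs1' : 1 < |s| := lt_of_not_ge hs1
    have hmin : min 1 (s^2) = 1 := min_eq_left (by nlinarith [_root_.sq_abs s])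
    rw [hmin, mul_one, if_neg hs1, sub_zero, abs_mul, Real.abs_exp]
    have hXeX : 0 < X * Real.exp X := mul_pos hX (Real.exp_pos _)
    rcases lt_trichotomy s 0 with hsn | hs0 | hsp
    · have habs : |s| = -s := abs_of_neg hsn
      have e1 : Real.exp (x*s) ≤ Real.exp (c*s) :=
        Real.exp_le_exp.mpr (by nlinarith)
      have e2 : c*|s| ≤ Real.exp (c*|s|) := by nlinarith [Real.add_one_le_exp (c*|s|)]
      have e3 : Real.exp (c*s) * Real.exp (c*|s|) = 1 := by
        rw [← Real.exp_add, habs]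
        ring_nf
        exact Real.exp_zero
      have hcs : 0 < c * |s| := mul_pos hc (by linarith)
      have hmain : (|s| * Real.exp (x*s)) * c ≤ 1 := by
        have p1 : 0 < Real.exp (c*s) := Real.exp_pos _
        have p2 : 0 < Real.exp (c*|s|) := Real.exp_pos _
        have t1 : (|s| * Real.exp (x*s)) * c ≤ (c * |s|) * Real.exp (c*s) := by
          nlinarith [mul_le_mul_of_nonneg_left e1 (le_of_lt hcs)]
        have t2 : (c * |s|) * Real.exp (c*s) ≤ Real.exp (c*|s|) * Real.exp (c*s) :=
          mul_le_mul_of_nonneg_right e2 p1.le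
        nlinarith
      have hfin : |s| * Real.exp (x*s) ≤ 1/c := by
        rw [le_div_iff₀ hc]; exact hmain
      linarith [mul_pos hk (Real.exp_pos (X*k))]
    · exfalso; rw [hs0] at hs1'; norm_num at hs1'
    · have habs : |s| = s := abs_of_pos hsp
      rw [habs]
      have hxs : x*s ≤ X*k := by nlinarith
      have hmain : s * Real.exp (x*s) ≤ k * Real.exp (X*k) :=
        mul_le_mul (by linarith) (Real.exp_le_exp.mpr hxs) (Real.exp_pos _).le (by linarith)
      linarith [one_div_pos.mpr hc]

lemma gR_convex_pt (x y a b s : ℝ) (ha : 0 ≤ a) (hb : 0 ≤ b) (hab : a + b = 1) :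
    gR (a*x + b*y) s ≤ a * gR x s + b * gR y s := by
  have h := convexOn_exp.2 (Set.mem_univ (x*s)) (Set.mem_univ (y*s)) ha hb hab
  simp only [smul_eq_mul] at h
  have harg : a*(x*s) + b*(y*s) = (a*x+b*y)*s := by ring
  rw [harg] at h
  unfold gR; split_ifs <;> nlinarith

lemma gR_zero (s : ℝ) : gR 0 s = 0 := by unfold gR; split_ifs <;> simp

lemma gR_lower {x s c k : ℝ} (hx : 0 ≤ x) (hc : 0 < c) (hs : s ≤ k) :
    -(min 1 (s^2)) + (Set.Ioi c).indicator (fun _ => Real.exp (x*c) - 1 - x) s ≤ gR x s := by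
  have hminnn : 0 ≤ min 1 (s^2) := le_min zero_le_one (sq_nonneg s)
  by_cases hsc : s ∈ Set.Ioi c
  · rw [Set.indicator_of_mem hsc]
    have hsc' : c < s := hsc
    have h1 : Real.exp (x*c) ≤ Real.exp (x*s) :=
      Real.exp_le_exp.mpr (mul_le_mul_of_nonneg_left hsc'.le hx)
    unfold gR
    split_ifs with h
    · have : x*s ≤ x := by nlinarith [le_abs_self s]
      linarith
    · linarith
  · rw [Set.indicator_of_notMem hsc, add_zero]
    unfold gR
    split_ifs with h
    · have h0 : 0 ≤ Real.exp (x*s) - 1 - x*s := by nlinarith [Real.add_one_le_exp (x*s)]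
      linarith
    · have hs1 : 1 < |s| := lt_of_not_ge h
      have hmin : min 1 (s^2) = 1 := min_eq_left (by nlinarith [_root_.sq_abs s])
      rw [hmin]
      linarith [Real.exp_pos (x*s)]

lemma gR_hasDerivAt (s x : ℝ) : HasDerivAt (fun y => gR y s) (gR' x s) x := by
  have h1 : HasDerivAt (fun y : ℝ => Real.exp (y*s)) (s * Real.exp (x*s)) x := by
    have := (Real.hasDerivAt_exp (x*s)).comp x (hasDerivAt_mul_const s)
    exact this.congr_deriv (by ring)
  unfold gR gR'
  by_cases h : |s| ≤ 1
  · simp only [if_pos h]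
    have h2 : HasDerivAt (fun y : ℝ => y * s) s x := hasDerivAt_mul_const s
    exact ((h1.sub (hasDerivAt_const x (1:ℝ))).sub h2).congr_deriv (by ring)
  · simp only [if_neg h]
    exact ((h1.sub (hasDerivAt_const x (1:ℝ))).sub (hasDerivAt_const x (0:ℝ))).congr_deriv (by ring)

end Stmt0Aux


open Stmt0Aux

set_option maxHeartbeats 1600000 in
/-- For the Laplace exponent `ψ` of a Lévy process with bounded positive
jumps (Lévy measure supported on `(-∞, k]` with right endpoint `k > 0`), for every `q > 0`
the equation `ψ(z) = q` has a unique positive real solution `ζ₀`; this root is simple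
(the derivative of `ψ` along the reals at `ζ₀` is positive); and every solution `z` with
`Re z ≥ 0` satisfies `Re z ≥ ζ₀`. -/
theorem stmt_0 (σ μ : ℝ) (hσ : 0 ≤ σ) (Λ : Measure ℝ)
    (hΛ0 : Λ {0} = 0)
    (hΛint : ∫⁻ x : ℝ, ENNReal.ofReal (min 1 (x ^ 2)) ∂Λ < ⊤)
    (k : ℝ) (hk : 0 < k)
    (hsupp : Λ (Set.Ioi k) = 0)
    (hsupp' : ∀ x : ℝ, 0 < x → x < k → 0 < Λ (Set.Ioi x))
    (ψ : ℂ → ℂ)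
    (hψ : ∀ z : ℂ, ψ z = (σ : ℂ) ^ 2 * z ^ 2 / 2 + (μ : ℂ) * z +
      ∫ x : ℝ, (Complex.exp (z * (x : ℂ)) - 1 - (if |x| ≤ 1 then z * (x : ℂ) else 0)) ∂Λ)
    (q : ℝ) (hq : 0 < q) :
    ∃ ζ₀ : ℝ, 0 < ζ₀ ∧ ψ (ζ₀ : ℂ) = (q : ℂ) ∧
      (∀ x : ℝ, 0 < x → ψ (x : ℂ) = (q : ℂ) → x = ζ₀) ∧
      0 < deriv (fun x : ℝ => (ψ (x : ℂ)).re) ζ₀ ∧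
      (∀ z : ℂ, 0 ≤ z.re → ψ z = (q : ℂ) → ζ₀ ≤ z.re) := by
  classical
  -- a.e. support bound
  have haek : ∀ᵐ s ∂Λ, s ≤ k := by
    rw [ae_iff]
    convert hsupp using 2
    ext s; simp [not_le]
  -- integrability of the dominating function
  have hmin_meas : Measurable (fun s : ℝ => min 1 (s^2)) :=
    (continuous_const.min (continuous_pow 2)).measurable
  have hmin_int : Integrable (fun s : ℝ => min 1 (s^2)) Λ := by
    refine ⟨hmin_meas.aestronglyMeasurable, ?_⟩
    rw [hasFiniteIntegral_iff_norm]
    refine lt_of_le_of_lt (le_of_eq (lintegral_congr fun s => ?_)) hΛint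
    rw [Real.norm_eq_abs, _root_.abs_of_nonneg (le_min zero_le_one (sq_nonneg s))]
  -- integrability of the complex integrand
  have hGint : ∀ z : ℂ, 0 ≤ z.re → Integrable (G z) Λ := by
    intro z hz
    refine Integrable.mono'
      (hmin_int.const_mul (3 * Real.exp ‖z‖ * ‖z‖^2 + (Real.exp (z.re * k) + 1)))
      (G_meas z).aestronglyMeasurable ?_
    filter_upwards [haek] with s hs
    exact norm_G_le z hz hs
  -- integrability of the real integrand
  have hgRint : ∀ x : ℝ, 0 ≤ x → Integrable (gR x) Λ := by
    intro x hx
    have h := (hGint (x:ℂ) (by simp [hx])).re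
    have heq : (fun s => RCLike.re (G (x:ℂ) s)) = gR x := by
      funext s; rw [G_ofReal]; simp
    rwa [heq] at h
  obtain ⟨fR, hfRdef⟩ : ∃ f : ℝ → ℝ, f = fun x => σ^2 * x^2/2 + μ*x + ∫ s, gR x s ∂Λ :=
    ⟨_, rfl⟩
  -- ψ on the reals
  have hψR : ∀ x : ℝ, ψ (x:ℂ) = ((fR x : ℝ) : ℂ) := by
    intro x
    rw [hψ]
    have hGi : (∫ s : ℝ, (Complex.exp ((x:ℂ)*(s:ℂ)) - 1 -
        (if |s| ≤ 1 then (x:ℂ)*(s:ℂ) else 0)) ∂Λ) = ((∫ s, gR x s ∂Λ : ℝ) : ℂ) := by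
      have h0 : (∫ s : ℝ, (Complex.exp ((x:ℂ)*(s:ℂ)) - 1 -
          (if |s| ≤ 1 then (x:ℂ)*(s:ℂ) else 0)) ∂Λ) = ∫ s, G (x:ℂ) s ∂Λ := rfl
      rw [h0]
      simp only [G_ofReal]
      exact integral_ofReal
    rw [hGi]
    simp only [hfRdef]
    push_cast
    ring
  have hfun : (fun x : ℝ => (ψ (x:ℂ)).re) = fR := by
    funext x; rw [hψR x]; simp
  have hfR0 : fR 0 = 0 := by
    simp [hfRdef, gR_zero]
  -- convexity
  have hconv : ConvexOn ℝ (Set.Ici (0:ℝ)) fR := by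
    refine ⟨convex_Ici 0, ?_⟩
    intro x hx y hy a b ha hb hab
    rw [Set.mem_Ici] at hx hy
    simp only [smul_eq_mul, hfRdef]
    have hI : ∫ s, gR (a*x+b*y) s ∂Λ ≤ a * (∫ s, gR x s ∂Λ) + b * (∫ s, gR y s ∂Λ) := by
      have hrhs : Integrable (fun s => a * gR x s + b * gR y s) Λ :=
        ((hgRint x hx).const_mul a).add ((hgRint y hy).const_mul b)
      have hlhs : Integrable (gR (a*x+b*y)) Λ :=
        hgRint _ (add_nonneg (mul_nonneg ha hx) (mul_nonneg hb hy))
      calc ∫ s, gR (a*x+b*y) s ∂Λ ≤ ∫ s, (a * gR x s + b * gR y s) ∂Λ :=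
            integral_mono hlhs hrhs (fun s => gR_convex_pt x y a b s ha hb hab)
        _ = a * (∫ s, gR x s ∂Λ) + b * (∫ s, gR y s ∂Λ) := by
            rw [integral_add ((hgRint x hx).const_mul a) ((hgRint y hy).const_mul b),
              integral_const_mul, integral_const_mul]
    have hquad : σ^2*(a*x+b*y)^2/2 + μ*(a*x+b*y) ≤
        a*(σ^2*x^2/2 + μ*x) + b*(σ^2*y^2/2 + μ*y) := by
      have hb' : b = 1 - a := by linarith
      subst hb'
      nlinarith [mul_nonneg (mul_nonneg (sq_nonneg σ) (mul_nonneg ha hb)) (sq_nonneg (x-y))]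
    linarith
  -- convex combination with 0
  have hcomb : ∀ u v : ℝ, 0 ≤ u → u ≤ v → 0 < v → fR u ≤ (u/v) * fR v := by
    intro u v hu huv hv
    have hb0 : 0 ≤ u/v := div_nonneg hu hv.le
    have hb1 : u/v ≤ 1 := (div_le_one hv).mpr huv
    have h := hconv.2 (Set.mem_Ici.mpr le_rfl) (Set.mem_Ici.mpr hv.le)
      (by linarith : (0:ℝ) ≤ 1 - u/v) hb0 (by ring)
    simp only [smul_eq_mul] at h
    have harg : (1-u/v)*0 + (u/v)*v = u := by field_simp; ring
    rw [harg, hfR0, mul_zero, zero_add] at h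
    exact h
  -- finiteness and positivity of mass beyond c
  obtain ⟨c, hcdef⟩ : ∃ c : ℝ, c = k/2 := ⟨_, rfl⟩
  have hc0 : 0 < c := by rw [hcdef]; linarith
  have hck : c < k := by rw [hcdef]; linarith
  have hminc : (0:ℝ) < min 1 (c^2) := lt_min one_pos (pow_pos hc0 2)
  have hfin : Λ (Set.Ioi c) < ⊤ := by
    have key : ENNReal.ofReal (min 1 (c^2)) * Λ (Set.Ioi c) ≤
        ∫⁻ s, ENNReal.ofReal (min 1 (s^2)) ∂Λ := by
      calc ENNReal.ofReal (min 1 (c^2)) * Λ (Set.Ioi c)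
          = ∫⁻ _ in Set.Ioi c, ENNReal.ofReal (min 1 (c^2)) ∂Λ := (setLIntegral_const _ _).symm
        _ ≤ ∫⁻ s in Set.Ioi c, ENNReal.ofReal (min 1 (s^2)) ∂Λ := by
            refine setLIntegral_mono (ENNReal.measurable_ofReal.comp hmin_meas) ?_
            intro s hs
            have hcs : c < s := Set.mem_Ioi.mp hs
            exact ENNReal.ofReal_le_ofReal (min_le_min le_rfl (by nlinarith))
        _ ≤ ∫⁻ s, ENNReal.ofReal (min 1 (s^2)) ∂Λ := setLIntegral_le_lintegral _ _
    by_contra h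
    push_neg at h
    have htop : Λ (Set.Ioi c) = ⊤ := top_le_iff.mp h
    rw [htop, ENNReal.mul_top (ENNReal.ofReal_pos.mpr hminc).ne'] at key
    exact absurd (lt_of_le_of_lt key hΛint) (lt_irrefl _)
  obtain ⟨m, hmdef⟩ : ∃ m : ℝ, m = (Λ (Set.Ioi c)).toReal := ⟨_, rfl⟩
  have hm0 : 0 < m := hmdef ▸ ENNReal.toReal_pos (hsupp' c hc0 hck).ne' hfin.ne
  obtain ⟨M, hMdef⟩ : ∃ M : ℝ, M = ∫ s, min 1 (s^2) ∂Λ := ⟨_, rfl⟩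
  have hM0 : 0 ≤ M := hMdef ▸ integral_nonneg fun s => le_min zero_le_one (sq_nonneg s)
  -- lower bound for fR
  have hlow : ∀ x : ℝ, 0 ≤ x →
      σ^2*x^2/2 + μ*x + (m * (Real.exp (x*c) - 1 - x) - M) ≤ fR x := by
    intro x hx
    have hind : Integrable ((Set.Ioi c).indicator (fun _ => Real.exp (x*c) - 1 - x)) Λ := by
      refine (integrable_indicator_iff measurableSet_Ioi).mpr ?_
      exact integrableOn_const hfin.ne
    have hle : ∀ᵐ s ∂Λ, -(min 1 (s^2)) +
        (Set.Ioi c).indicator (fun _ => Real.exp (x*c)-1-x) s ≤ gR x s :=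
      haek.mono fun s hs => gR_lower hx hc0 hs
    have hneg : Integrable (fun s : ℝ => -(min 1 (s^2))) Λ := hmin_int.neg
    have hintsum : Integrable (fun s => -(min 1 (s^2)) +
        (Set.Ioi c).indicator (fun _ => Real.exp (x*c)-1-x) s) Λ := hneg.add hind
    have hI := integral_mono_ae hintsum (hgRint x hx) hle
    rw [integral_add hneg hind, integral_neg,
      integral_indicator_const _ measurableSet_Ioi] at hI
    rw [← hMdef, measureReal_def, ← hmdef] at hI
    simp only [smul_eq_mul] at hI
    simp only [hfRdef]
    linarith [hI]
  -- choice of a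
  have hfa : ∃ a : ℝ, 0 < a ∧ a ≤ 1 ∧ fR a < q := by
    by_cases h1 : fR 1 ≤ 0
    · exact ⟨1, one_pos, le_rfl, by linarith⟩
    · push_neg at h1
      obtain ⟨a, hadef⟩ : ∃ a : ℝ, a = min (1/2) (q/(2*fR 1)) := ⟨_, rfl⟩
      have ha0 : 0 < a := hadef ▸ lt_min (by norm_num) (div_pos hq (by linarith))
      have ha1 : a ≤ 1 := hadef ▸ le_trans (min_le_left _ _) (by norm_num)
      refine ⟨a, ha0, ha1, ?_⟩
      have hle := hcomb a 1 ha0.le ha1 one_pos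
      rw [div_one] at hle
      have h2 : a ≤ q/(2*fR 1) := hadef ▸ min_le_right _ _
      have h3 : a * fR 1 ≤ (q/(2*fR 1)) * fR 1 := mul_le_mul_of_nonneg_right h2 h1.le
      have hne : fR 1 ≠ 0 := ne_of_gt h1
      have h4 : (q/(2*fR 1)) * fR 1 = q/2 := by field_simp
      have h5 : fR a ≤ q/2 := by rw [← h4]; exact hle.trans h3
      linarith
  obtain ⟨a, ha0, ha1, haq⟩ := hfa
  -- choice of b
  have hfb : ∃ b : ℝ, a ≤ b ∧ 0 < b ∧ q < fR b := by
    obtain ⟨α, hαdef⟩ : ∃ α : ℝ, α = m * c^2/4 := ⟨_, rfl⟩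
    have hα0 : 0 < α := by rw [hαdef]; positivity
    obtain ⟨β, hβdef⟩ : ∃ β : ℝ, β = |μ| + m := ⟨_, rfl⟩
    obtain ⟨γ, hγdef⟩ : ∃ γ : ℝ, γ = m + M + q + 1 := ⟨_, rfl⟩
    have hγ0 : 0 < γ := by rw [hγdef]; linarith
    obtain ⟨b, hbdef⟩ : ∃ b : ℝ, b = max (max a 1) ((β + γ)/α) := ⟨_, rfl⟩
    have hb1 : 1 ≤ b := hbdef ▸ le_trans (le_max_right a 1) (le_max_left _ _)
    have hba : a ≤ b := hbdef ▸ le_trans (le_max_left a 1) (le_max_left _ _)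
    have hb0 : 0 < b := lt_of_lt_of_le one_pos hb1
    have hbα : β + γ ≤ α * b := by
      have h6 : (β + γ)/α ≤ b := hbdef ▸ le_max_right _ _
      rw [div_le_iff₀ hα0] at h6
      have h7 : b * α = α * b := mul_comm _ _
      linarith
    refine ⟨b, hba, hb0, ?_⟩
    have hl := hlow b hb0.le
    have hlexp : m*(Real.exp (b*c) - 1 - b) = m*Real.exp (b*c) - m - m*b := by ring
    have hquarter := quarter_sq_le_exp (b*c) (by positivity)
    have hμb : -(|μ| * b) ≤ μ*b := by
      have h8 := neg_abs_le μ
      nlinarith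
    have hσb : 0 ≤ σ^2*b^2/2 := by positivity
    have e1 : m * ((b*c)^2/4) ≤ m * Real.exp (b*c) :=
      mul_le_mul_of_nonneg_left hquarter hm0.le
    have e2 : α*b^2 = m*((b*c)^2/4) := by rw [hαdef]; ring
    have hβb : β*b = |μ| * b + m*b := by rw [hβdef]; ring
    have hkey : α*b^2 - β*b - (m + M) ≤ fR b := by linarith
    have e3 : (β+γ)*b ≤ (α*b)*b := mul_le_mul_of_nonneg_right hbα hb0.le
    have e3' : (α*b)*b = α*b^2 := by ring
    have e4 : γ ≤ γ*b := by
      have h9 := mul_nonneg hγ0.le (sub_nonneg.mpr hb1)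
      have h9' : γ*(b-1) = γ*b - γ := by ring
      linarith
    have e6 : (β+γ)*b = β*b + γ*b := by ring
    have e5 : γ = m + M + q + 1 := hγdef
    linarith
  obtain ⟨b, hab, hb0, hbq⟩ := hfb
  -- IVT
  have hcont : ContinuousOn fR (Set.Icc a b) := by
    refine (hconv.continuousOn_interior).mono ?_
    rw [interior_Ici]
    intro t ht
    exact lt_of_lt_of_le ha0 ht.1
  obtain ⟨ζ₀, hζmem, hζval⟩ := intermediate_value_Icc hab hcont ⟨haq.le, hbq.le⟩
  have hζ0 : 0 < ζ₀ := lt_of_lt_of_le ha0 hζmem.1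
  -- uniqueness
  have huniq : ∀ x : ℝ, 0 < x → fR x = q → x = ζ₀ := by
    intro x hx hfx
    rcases lt_trichotomy x ζ₀ with h | h | h
    · exfalso
      have h5 := hcomb x ζ₀ hx.le h.le hζ0
      rw [hζval] at h5
      have h6 : x/ζ₀ < 1 := (div_lt_one hζ0).mpr h
      linarith [mul_lt_mul_of_pos_right h6 hq]
    · exact h
    · exfalso
      have h5 := hcomb ζ₀ x hζ0.le h.le hx
      rw [hfx, hζval] at h5
      have h6 : ζ₀/x < 1 := (div_lt_one hx).mpr h
      linarith [mul_lt_mul_of_pos_right h6 hq]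
  -- derivative
  have hball : ∀ x ∈ Metric.ball ζ₀ (ζ₀/2), ζ₀/2 ≤ x ∧ x ≤ 2*ζ₀ := by
    intro x hx
    rw [Metric.mem_ball, Real.dist_eq] at hx
    have h := abs_lt.mp hx
    exact ⟨by linarith [h.1], by linarith [h.2]⟩
  have hder := hasDerivAt_integral_of_dominated_loc_of_deriv_le
    (F := fun (x : ℝ) (s : ℝ) => gR x s) (F' := fun (x : ℝ) (s : ℝ) => gR' x s)
    (x₀ := ζ₀) (s := Metric.ball ζ₀ (ζ₀/2))
    (bound := fun s => ((2*ζ₀) * Real.exp (2*ζ₀) + 1/(ζ₀/2) +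
      k * Real.exp ((2*ζ₀)*k)) * min 1 (s^2))
    (Metric.ball_mem_nhds _ (by positivity))
    (Filter.Eventually.of_forall fun x => (gR_meas x).aestronglyMeasurable)
    (hgRint ζ₀ hζ0.le)
    ((gR'_meas ζ₀).aestronglyMeasurable)
    (haek.mono fun s hs => by
      intro x hx
      rw [Real.norm_eq_abs]
      exact gR'_bound hk (by positivity) (hball x hx).1 (hball x hx).2 hs)
    (hmin_int.const_mul _)
    (Filter.Eventually.of_forall fun s x _ => gR_hasDerivAt s x)
  obtain ⟨-, hHD⟩ := hder
  have hquadD : HasDerivAt (fun x : ℝ => σ^2*x^2/2 + μ*x) (σ^2*(2*ζ₀)/2 + μ) ζ₀ := by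
    have h1 : HasDerivAt (fun x : ℝ => x^2) (2*ζ₀) ζ₀ := by
      simpa using hasDerivAt_pow 2 ζ₀
    have h3 : HasDerivAt (fun x : ℝ => σ^2*x^2/2) (σ^2*(2*ζ₀)/2) ζ₀ :=
      (h1.const_mul (σ^2)).div_const 2
    have h4 : HasDerivAt (fun x : ℝ => μ*x) μ ζ₀ := by
      simpa using (hasDerivAt_id ζ₀).const_mul μ
    exact h3.add h4
  have hfRD : HasDerivAt fR (σ^2*(2*ζ₀)/2 + μ + ∫ s, gR' ζ₀ s ∂Λ) ζ₀ := by
    rw [hfRdef]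
    exact hquadD.add hHD
  have hslope : ∀ y, ζ₀ < y → q/ζ₀ ≤ slope fR ζ₀ y := by
    intro y hy
    have hsl := hconv.slope_mono_adjacent (Set.mem_Ici.mpr le_rfl)
      (Set.mem_Ici.mpr (by linarith : (0:ℝ) ≤ y)) hζ0 hy
    rw [hζval, hfR0] at hsl
    rw [slope_def_field, hζval]
    have he : (q - 0)/(ζ₀ - 0) = q/ζ₀ := by ring
    linarith [he ▸ hsl]
  have htends : Filter.Tendsto (slope fR ζ₀) (nhdsWithin ζ₀ (Set.Ioi ζ₀))
      (nhds (σ^2*(2*ζ₀)/2 + μ + ∫ s, gR' ζ₀ s ∂Λ)) :=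
    (hasDerivAt_iff_tendsto_slope.mp hfRD).mono_left
      (nhdsWithin_mono ζ₀ fun y hy => ne_of_gt hy)
  have hqz : q/ζ₀ ≤ σ^2*(2*ζ₀)/2 + μ + ∫ s, gR' ζ₀ s ∂Λ :=
    ge_of_tendsto htends (by
      filter_upwards [self_mem_nhdsWithin] with y hy
      exact hslope y hy)
  have hderivpos : 0 < deriv (fun x : ℝ => (ψ (x:ℂ)).re) ζ₀ := by
    rw [hfun, hfRD.deriv]
    have h10 : 0 < q/ζ₀ := div_pos hq hζ0
    linarith
  -- quadrant bound
  have hquadrant : ∀ z : ℂ, 0 ≤ z.re → ψ z = (q:ℂ) → ζ₀ ≤ z.re := by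
    intro z hz hψz
    by_contra hlt
    push_neg at hlt
    have h1 : (ψ z).re = q := by rw [hψz]; simp
    have hψz' : ((σ:ℂ)^2*z^2/2 + (μ:ℂ)*z + ∫ s, G z s ∂Λ) = ψ z := (hψ z).symm
    have hterm1 : ((σ:ℂ)^2*z^2/2).re = σ^2*(z.re^2 - z.im^2)/2 := by
      have hrw : (σ:ℂ)^2*z^2/2 = ((σ^2/2 : ℝ):ℂ) * z^2 := by push_cast; ring
      rw [hrw]
      simp [Complex.mul_re, Complex.ofReal_re, Complex.ofReal_im, pow_two]
      ring
    have hterm2 : ((μ:ℂ)*z).re = μ*z.re := by simp [Complex.mul_re]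
    have hint1 : Integrable (fun s => (G z s).re) Λ := by
      have h := (hGint z hz).re
      simpa [RCLike.re_to_complex] using h
    have hterm3 : (∫ s, G z s ∂Λ).re ≤ ∫ s, gR z.re s ∂Λ := by
      have hre := integral_re (hGint z hz)
      simp only [RCLike.re_to_complex] at hre
      rw [← hre]
      refine integral_mono hint1 (hgRint z.re hz) ?_
      intro s
      have hre2 : (Complex.exp (z*(s:ℂ))).re ≤ Real.exp (z.re*s) := by
        have h := Complex.re_le_norm (Complex.exp (z*(s:ℂ)))
        rw [Complex.norm_exp] at h
        simpa [Complex.mul_re] using h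
      show (G z s).re ≤ gR z.re s
      rw [G_re]
      unfold gR
      split_ifs <;> simp <;> linarith
    have h2 : (ψ z).re ≤ fR z.re := by
      rw [← hψz']
      simp only [Complex.add_re]
      rw [hterm1, hterm2]
      simp only [hfRdef]
      have him : 0 ≤ σ^2 * z.im^2 := mul_nonneg (sq_nonneg σ) (sq_nonneg z.im)
      linarith [hterm3]
    have h3 := hcomb z.re ζ₀ hz hlt.le hζ0
    rw [hζval] at h3
    have h4 : z.re/ζ₀ < 1 := (div_lt_one hζ0).mpr hlt
    linarith [mul_lt_mul_of_pos_right h4 hq]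
  refine ⟨ζ₀, hζ0, ?_, ?_, hderivpos, hquadrant⟩
  · rw [hψR, hζval]
  · intro x hx hψx
    apply huniq x hx
    have h11 := hψR x
    rw [hψx] at h11
    exact_mod_cast h11.symm
end

section
/- For every ε > 0 there exists R > 0 such that every z ∈ Q₁ with ψ(z) = q and |z| > R satisfies |Re z − (1/k)(ln|B/A| + (a+b) ln|z|)| < ε. (The real parts of large solutions of ψ(z) = q grow like (1/k) ln|B/A| + ((a+b)/k) ln|z|.) -/
open Complex

set_option maxHeartbeats 1000000

/-- Let `ψ` satisfy `ψ(z) = A e^{kz} z^{-a} + B z^{b} + o(e^{kz} z^{-a}) + o(z^{b})`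
as `z → ∞` in the open first quadrant `Q₁`. Then for every `ε > 0` there exists `R > 0` such that
every `z ∈ Q₁` with `ψ(z) = q` and `|z| > R` satisfies
`|Re z - (1/k)(ln|B/A| + (a+b) ln|z|)| < ε`. -/
theorem stmt_6 (k a b : ℝ) (hk : 0 < k) (ha : 0 ≤ a) (hb : 0 < b)
    (A B : ℂ) (hA : A ≠ 0) (hB : B ≠ 0) (q : ℝ)
    (ψ : ℂ → ℂ)
    (hψ : ∀ ε : ℝ, 0 < ε → ∃ R : ℝ, 0 < R ∧ ∀ z : ℂ, 0 < z.re → 0 < z.im → R < ‖z‖ →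
      ‖ψ z - A * Complex.exp (k * z) * z ^ (-(a : ℂ)) - B * z ^ ((b : ℂ))‖ ≤
        ε * (‖Complex.exp (k * z)‖ * ‖z‖ ^ (-a) + ‖z‖ ^ b)) :
    ∀ ε : ℝ, 0 < ε → ∃ R : ℝ, 0 < R ∧ ∀ z : ℂ, 0 < z.re → 0 < z.im →
      ψ z = (q : ℂ) → R < ‖z‖ →
      |z.re - (1 / k) * (Real.log ‖B / A‖ + (a + b) * Real.log ‖z‖)| < ε := by
  intro ε hε
  set δ := k * ε with hδdef
  have hδ : 0 < δ := mul_pos hk hε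
  have hexp1 : Real.exp (-δ) < 1 := Real.exp_lt_one_iff.mpr (by linarith)
  set t := min (1/4) (min (δ/4) ((1 - Real.exp (-δ))/4)) with ht_def
  have ht : 0 < t := lt_min (by norm_num) (lt_min (by linarith) (by linarith))
  have ht1 : t ≤ 1/4 := min_le_left _ _
  have ht2 : t ≤ δ/4 := le_trans (min_le_right _ _) (min_le_left _ _)
  have ht3 : t ≤ (1 - Real.exp (-δ))/4 := le_trans (min_le_right _ _) (min_le_right _ _)
  have hAn : (0:ℝ) < ‖A‖ := norm_pos_iff.mpr hA
  have hBn : (0:ℝ) < ‖B‖ := norm_pos_iff.mpr hB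
  set m := min ‖A‖ ‖B‖ with hm_def
  have hm : 0 < m := lt_min hAn hBn
  obtain ⟨R₀, hR₀, hH⟩ := hψ (t * m) (mul_pos ht hm)
  set c := max 1 (|q| / (t * ‖B‖)) with hc_def
  have hc1 : (1:ℝ) ≤ c := le_max_left _ _
  have hc0 : (0:ℝ) < c := lt_of_lt_of_le one_pos hc1
  refine ⟨max R₀ (max 1 (c ^ (1/b))), lt_of_lt_of_le hR₀ (le_max_left _ _), ?_⟩
  intro z hre him hq hz
  have hz1 : (1:ℝ) < ‖z‖ := lt_of_le_of_lt (le_trans (le_max_left _ _) (le_max_right _ _)) hz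
  have hz0 : (0:ℝ) < ‖z‖ := lt_trans one_pos hz1
  have hzne : z ≠ 0 := norm_pos_iff.mp hz0
  -- ‖z‖^b > c
  have hcb : c < ‖z‖ ^ b := by
    have h1 : c ^ (1/b) < ‖z‖ :=
      lt_of_le_of_lt (le_trans (le_max_right _ _) (le_max_right _ _)) hz
    have h2 : (c ^ (1/b)) ^ b < ‖z‖ ^ b :=
      Real.rpow_lt_rpow (Real.rpow_nonneg hc0.le _) h1 hb
    rwa [← Real.rpow_mul hc0.le, one_div_mul_cancel hb.ne', Real.rpow_one] at h2
  -- bound |q|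
  have hzb0 : (0:ℝ) < ‖z‖ ^ b := Real.rpow_pos_of_pos hz0 b
  have hq_le : |q| ≤ t * ‖B‖ * ‖z‖ ^ b := by
    have h1 : |q| / (t * ‖B‖) ≤ c := le_max_right _ _
    have h2 : |q| / (t * ‖B‖) ≤ ‖z‖ ^ b := le_trans h1 hcb.le
    have htB : 0 < t * ‖B‖ := mul_pos ht hBn
    calc |q| = (|q| / (t * ‖B‖)) * (t * ‖B‖) := (div_mul_cancel₀ _ htB.ne').symm
    _ ≤ ‖z‖ ^ b * (t * ‖B‖) := by exact mul_le_mul_of_nonneg_right h2 htB.le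
    _ = t * ‖B‖ * ‖z‖ ^ b := by ring
  -- norms of the main terms
  have habs_exp : ‖Complex.exp (↑k * z)‖ = Real.exp (k * z.re) := by
    rw [Complex.norm_exp]; simp
  have habs_pa : ‖z ^ (-(a:ℂ))‖ = ‖z‖ ^ (-a) := by
    rw [Complex.norm_cpow_of_ne_zero hzne]; simp
  have habs_pb : ‖z ^ ((b:ℂ))‖ = ‖z‖ ^ b := by
    rw [Complex.norm_cpow_of_ne_zero hzne]; simp
  set X : ℝ := Real.exp (k * z.re) * ‖z‖ ^ (-a) with hX_def
  have hX0 : 0 < X := mul_pos (Real.exp_pos _) (Real.rpow_pos_of_pos hz0 _)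
  set E : ℝ := ‖A‖ * X with hE_def
  set P : ℝ := ‖B‖ * ‖z‖ ^ b with hP_def
  have hE0 : 0 < E := mul_pos hAn hX0
  have hP0 : 0 < P := mul_pos hBn hzb0
  have hEc : ‖A * Complex.exp (↑k * z) * z ^ (-(a:ℂ))‖ = E := by
    rw [norm_mul, norm_mul, habs_exp, habs_pa, hE_def, hX_def]; ring
  have hPc : ‖B * z ^ ((b:ℂ))‖ = P := by
    rw [norm_mul, habs_pb]
  -- the key estimate
  have hHz := hH z hre him (lt_of_le_of_lt (le_max_left _ _) hz)
  rw [hq, habs_exp] at hHz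
  have hkey : |E - P| ≤ t * E + 2 * t * P := by
    have h1 : |E - P| ≤ ‖A * Complex.exp (↑k * z) * z ^ (-(a:ℂ)) + B * z ^ ((b:ℂ))‖ := by
      have := abs_norm_sub_norm_le (A * Complex.exp (↑k * z) * z ^ (-(a:ℂ))) (-(B * z ^ ((b:ℂ))))
      rwa [norm_neg, sub_neg_eq_add, hEc, hPc] at this
    have h2 : ‖A * Complex.exp (↑k * z) * z ^ (-(a:ℂ)) + B * z ^ ((b:ℂ))‖ ≤
        |q| + t * m * (X + ‖z‖ ^ b) := by
      have h3 : A * Complex.exp (↑k * z) * z ^ (-(a:ℂ)) + B * z ^ ((b:ℂ)) =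
          (q:ℂ) - ((q:ℂ) - A * Complex.exp (↑k * z) * z ^ (-(a:ℂ)) - B * z ^ ((b:ℂ))) := by ring
      rw [h3]
      refine le_trans (norm_sub_le _ _) ?_
      have h4 : ‖(q:ℂ)‖ = |q| := by simp [Complex.norm_real]
      rw [h4]
      exact add_le_add_right hHz _
    have h5 : t * m * X ≤ t * E := by
      have : m * X ≤ ‖A‖ * X := mul_le_mul_of_nonneg_right (min_le_left _ _) hX0.le
      calc t * m * X = t * (m * X) := by ring
      _ ≤ t * (‖A‖ * X) := mul_le_mul_of_nonneg_left this ht.le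
      _ = t * E := by rw [hE_def]
    have h6 : t * m * ‖z‖ ^ b ≤ t * P := by
      have : m * ‖z‖ ^ b ≤ ‖B‖ * ‖z‖ ^ b := mul_le_mul_of_nonneg_right (min_le_right _ _) hzb0.le
      calc t * m * ‖z‖ ^ b = t * (m * ‖z‖ ^ b) := by ring
      _ ≤ t * (‖B‖ * ‖z‖ ^ b) := mul_le_mul_of_nonneg_left this ht.le
      _ = t * P := by rw [hP_def]
    have h7 : t * ‖B‖ * ‖z‖ ^ b = t * P := by rw [hP_def]; ring
    calc |E - P| ≤ |q| + t * m * (X + ‖z‖ ^ b) := le_trans h1 h2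
    _ = |q| + t * m * X + t * m * ‖z‖ ^ b := by ring
    _ ≤ t * P + t * E + t * P := by rw [← h7]; linarith [h5, h6, hq_le]
    _ = t * E + 2 * t * P := by ring
  have hk1 := abs_le.mp hkey
  -- upper bound : E < exp δ * P
  have hupper : E < Real.exp δ * P := by
    have h14 : 1 + 4*t < Real.exp δ := by
      have := Real.add_one_lt_exp hδ.ne'
      linarith
    have e2 : E ≤ (1 + 4*t) * P := by
      have e1 : (1 - t) * E ≤ (1 - t) * ((1 + 4*t) * P) := by nlinarith [hk1.2, mul_nonneg (mul_nonneg ht.le (by linarith : (0:ℝ) ≤ 1 - 4*t)) hP0.le]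
      have h1t : (0:ℝ) < 1 - t := by linarith
      exact le_of_mul_le_mul_left e1 h1t
    calc E ≤ (1 + 4*t) * P := e2
    _ < Real.exp δ * P := by exact mul_lt_mul_of_pos_right h14 hP0
  -- lower bound : exp (-δ) * P < E
  have hlower : Real.exp (-δ) * P < E := by
    have h13 : Real.exp (-δ) < 1 - 3*t := by linarith
    have e2 : (1 - 3*t) * P ≤ E := by
      have e1 : (1 + t) * ((1 - 3*t) * P) ≤ (1 + t) * E := by nlinarith [hk1.1, mul_nonneg (mul_nonneg ht.le ht.le) hP0.le]
      have h1t : (0:ℝ) < 1 + t := by linarith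
      exact le_of_mul_le_mul_left e1 h1t
    calc Real.exp (-δ) * P < (1 - 3*t) * P := mul_lt_mul_of_pos_right h13 hP0
    _ ≤ E := e2
  -- take logarithms
  have hlog : |Real.log E - Real.log P| < δ := by
    rw [abs_lt]
    constructor
    · have := Real.log_lt_log (mul_pos (Real.exp_pos _) hP0) hlower
      rw [Real.log_mul (Real.exp_pos _).ne' hP0.ne', Real.log_exp] at this
      linarith
    · have := Real.log_lt_log hE0 hupper
      rw [Real.log_mul (Real.exp_pos _).ne' hP0.ne', Real.log_exp] at this
      linarith
  have hlogE : Real.log E = Real.log ‖A‖ + (k * z.re + (-a) * Real.log ‖z‖) := by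
    rw [hE_def, hX_def, Real.log_mul hAn.ne' (mul_pos (Real.exp_pos _) (Real.rpow_pos_of_pos hz0 _)).ne',
      Real.log_mul (Real.exp_pos _).ne' (Real.rpow_pos_of_pos hz0 _).ne', Real.log_exp,
      Real.log_rpow hz0]
  have hlogP : Real.log P = Real.log ‖B‖ + b * Real.log ‖z‖ := by
    rw [hP_def, Real.log_mul hBn.ne' hzb0.ne', Real.log_rpow hz0]
  rw [hlogE, hlogP] at hlog
  have habsBA : ‖B / A‖ = ‖B‖ / ‖A‖ := by rw [norm_div]
  have hfrac : z.re - (1 / k) * (Real.log ‖B / A‖ + (a + b) * Real.log ‖z‖) =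
      (1 / k) * ((Real.log ‖A‖ + (k * z.re + (-a) * Real.log ‖z‖)) -
        (Real.log ‖B‖ + b * Real.log ‖z‖)) := by
    rw [habsBA, Real.log_div hBn.ne' hAn.ne']
    field_simp
    ring
  rw [hfrac, abs_mul, abs_of_pos (one_div_pos.mpr hk)]
  calc (1 / k) * |(Real.log ‖A‖ + (k * z.re + (-a) * Real.log ‖z‖)) -
        (Real.log ‖B‖ + b * Real.log ‖z‖)| < (1 / k) * δ :=
      mul_lt_mul_of_pos_left hlog (one_div_pos.mpr hk)
  _ = ε := by rw [hδdef]; field_simp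
end

section
/- For every ε > 0 there exists R > 0 such that every z ∈ Q₁ with ψ(z) = q and |z| > R satisfies |arg z − π/2| < ε. (The arguments of large solutions of ψ(z) = q tend to π/2.) -/
open Complex

/-- Let `ψ` satisfy `ψ(z) = A e^{kz} z^{-a} + B z^{b} + o(e^{kz} z^{-a}) + o(z^{b})`
as `z → ∞` in the open first quadrant `Q₁`. Then for every `ε > 0` there exists `R > 0` such that
every `z ∈ Q₁` with `ψ(z) = q` and `|z| > R` satisfies `|arg z - π/2| < ε`. -/
theorem stmt_7 (k a b : ℝ) (hk : 0 < k) (ha : 0 ≤ a) (hb : 0 < b)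
    (A B : ℂ) (hA : A ≠ 0) (hB : B ≠ 0) (q : ℝ)
    (ψ : ℂ → ℂ)
    (hψ : ∀ ε : ℝ, 0 < ε → ∃ R : ℝ, 0 < R ∧ ∀ z : ℂ, 0 < z.re → 0 < z.im → R < ‖z‖ →
      ‖ψ z - A * Complex.exp (k * z) * z ^ (-(a : ℂ)) - B * z ^ ((b : ℂ))‖ ≤
        ε * (‖Complex.exp (k * z)‖ * ‖z‖ ^ (-a) + ‖z‖ ^ b)) :
    ∀ ε : ℝ, 0 < ε → ∃ R : ℝ, 0 < R ∧ ∀ z : ℂ, 0 < z.re → 0 < z.im →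
      ψ z = (q : ℂ) → R < ‖z‖ → |z.arg - Real.pi / 2| < ε := by
  intro ε hε
  have harg : ∀ z : ℂ, 0 < z.re → 0 < z.im → 0 < z.arg ∧ z.arg < Real.pi / 2 := by
    intro z hre him
    have hz : z ≠ 0 := fun h => by simp [h] at hre
    rw [Complex.arg_of_re_nonneg hre.le]
    constructor
    · exact Real.arcsin_pos.mpr (div_pos him (norm_pos_iff.mpr hz))
    · refine Real.arcsin_lt_pi_div_two.mpr ?_
      rw [div_lt_one (norm_pos_iff.mpr hz)]
      calc z.im ≤ |z.im| := le_abs_self _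
        _ < ‖z‖ := Complex.abs_im_lt_norm.mpr hre.ne'
  by_cases hεs : Real.pi / 2 ≤ ε
  · refine ⟨1, one_pos, fun z hre him _ _ => ?_⟩
    obtain ⟨h1, h2⟩ := harg z hre him
    rw [abs_sub_lt_iff]
    constructor <;> linarith
  push_neg at hεs
  set δ := Real.sin ε with hδdef
  have hδ : 0 < δ := Real.sin_pos_of_pos_of_lt_pi hε (hεs.trans (by linarith [Real.pi_pos]))
  clear_value δ
  have hA0 : 0 < ‖A‖ := norm_pos_iff.mpr hA
  set C : ℝ := ‖B‖ + ‖A‖ / 2 with hC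
  set M : ℝ := 2 * (|q| + C) / ‖A‖ with hM
  obtain ⟨R₀, hR₀, hψ'⟩ := hψ (‖A‖ / 2) (by positivity)
  have htend := tendsto_exp_mul_div_rpow_atTop (a + b) (k * δ) (by positivity)
  obtain ⟨R₁, hR₁⟩ := (htend.eventually_gt_atTop M).exists_forall_of_atTop
  clear_value C M
  refine ⟨max (max R₀ R₁) 1, lt_max_of_lt_right one_pos, fun z hre him hq hz => ?_⟩
  obtain ⟨h1, h2⟩ := harg z hre him
  by_contra hcon
  push_neg at hcon
  have hargle : z.arg ≤ Real.pi / 2 - ε := by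
    rw [abs_sub_comm, _root_.abs_of_nonneg (by linarith : (0:ℝ) ≤ Real.pi / 2 - z.arg)] at hcon
    linarith
  have hz0 : z ≠ 0 := fun h => by simp [h] at hre
  set t : ℝ := ‖z‖ with ht
  have ht1 : (1 : ℝ) < t := lt_of_le_of_lt (le_max_right _ _) hz
  have ht0 : 0 < t := lt_trans one_pos ht1
  clear_value t
  have hcos : δ ≤ Real.cos z.arg := by
    have h3 := Real.cos_le_cos_of_nonneg_of_le_pi h1.le
      (by linarith [Real.pi_pos] : Real.pi / 2 - ε ≤ Real.pi) hargle
    rw [hδdef]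
    rwa [Real.cos_pi_div_two_sub] at h3
  have hre' : δ * t ≤ z.re := by
    have h4 := Complex.norm_mul_cos_arg z
    have h5 : t * δ ≤ t * Real.cos z.arg := mul_le_mul_of_nonneg_left hcos ht0.le
    calc δ * t = t * δ := mul_comm _ _
      _ ≤ t * Real.cos z.arg := h5
      _ = z.re := by rw [ht]; exact h4
  have hE : ‖Complex.exp (k * z)‖ = Real.exp (k * z.re) := by
    rw [Complex.norm_exp]
    congr 1
    simp
  set E : ℝ := Real.exp (k * z.re) with hEdef
  clear_value E
  have hEb : Real.exp (k * δ * t) ≤ E := by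
    rw [hEdef]
    apply Real.exp_le_exp.mpr
    calc k * δ * t = k * (δ * t) := by ring
      _ ≤ k * z.re := mul_le_mul_of_nonneg_left hre' hk.le
  have hbound := hψ' z hre him (by
    rw [← ht]
    exact lt_of_le_of_lt (le_trans (le_max_left _ _) (le_max_left _ _)) hz)
  rw [hq, hE, ← ht] at hbound
  have hu : ‖A * Complex.exp (k * z) * z ^ (-(a : ℂ))‖ = ‖A‖ * E * t ^ (-a) := by
    rw [norm_mul, norm_mul, hE]
    congr 1
    rw [show (-(a:ℂ)) = ((-a : ℝ) : ℂ) by push_cast; ring,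
      Complex.norm_cpow_real, ht]
  have hv : ‖B * z ^ ((b : ℂ))‖ = ‖B‖ * t ^ b := by
    rw [norm_mul]
    congr 1
    rw [Complex.norm_cpow_real, ht]
  have hq' : ‖((q:ℝ) : ℂ)‖ = |q| := by
    rw [Complex.norm_real, Real.norm_eq_abs]
  have key : ‖A‖ * E * t ^ (-a) ≤ |q| + ‖B‖ * t ^ b + ‖A‖/2 * (E * t ^ (-a) + t ^ b) := by
    have h6 := norm_sub_norm_le (A * Complex.exp (k * z) * z ^ (-(a : ℂ)))
      (((q:ℝ):ℂ) - B * z ^ ((b : ℂ)))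
    have heq : A * Complex.exp (k * z) * z ^ (-(a : ℂ)) - (((q:ℝ):ℂ) - B * z ^ ((b : ℂ)))
        = -(((q:ℝ):ℂ) - A * Complex.exp (k * z) * z ^ (-(a : ℂ)) - B * z ^ ((b : ℂ))) := by ring
    rw [heq, norm_neg] at h6
    have hn : ‖((q:ℝ):ℂ) - B * z ^ ((b : ℂ))‖ ≤ |q| + ‖B‖ * t ^ b := by
      calc ‖((q:ℝ):ℂ) - B * z ^ ((b : ℂ))‖ ≤ ‖((q:ℝ):ℂ)‖ + ‖B * z ^ ((b:ℂ))‖ := norm_sub_le _ _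
        _ = |q| + ‖B‖ * t ^ b := by rw [hq', hv]
    have h7 := le_trans (sub_le_iff_le_add.mp h6) (add_le_add hbound hn)
    rw [hu] at h7
    linarith
  have hta : (0:ℝ) < t ^ (-a) := Real.rpow_pos_of_pos ht0 _
  have hkey2 : ‖A‖/2 * E * t ^ (-a) ≤ |q| + C * t ^ b := by
    rw [hC]; linarith
  have hmul : ‖A‖/2 * E ≤ (|q| + C * t ^ b) * t ^ a := by
    have h3 : ‖A‖/2 * E * t ^ (-a) * t ^ a ≤ (|q| + C * t ^ b) * t ^ a :=
      mul_le_mul_of_nonneg_right hkey2 (Real.rpow_pos_of_pos ht0 a).le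
    have heq : ‖A‖/2 * E * t ^ (-a) * t ^ a = ‖A‖/2 * E := by
      rw [mul_assoc, ← Real.rpow_add ht0]
      simp
    linarith
  have htab : t ^ a ≤ t ^ (a + b) := Real.rpow_le_rpow_of_exponent_le ht1.le (by linarith)
  have htabpos : (0:ℝ) < t ^ (a + b) := Real.rpow_pos_of_pos ht0 _
  have hbig : ‖A‖/2 * E ≤ (|q| + C) * t ^ (a + b) := by
    have hexp : (|q| + C * t ^ b) * t ^ a = |q| * t ^ a + C * t ^ (b + a) := by
      rw [Real.rpow_add ht0]; ring
    rw [hexp] at hmul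
    have h1' : |q| * t ^ a ≤ |q| * t ^ (a+b) := mul_le_mul_of_nonneg_left htab (abs_nonneg q)
    have h2' : t ^ (b + a) = t ^ (a + b) := by rw [add_comm b a]
    rw [h2'] at hmul
    linarith
  have hfin : Real.exp (k * δ * t) / t ^ (a + b) ≤ M := by
    rw [div_le_iff₀ htabpos, hM, div_mul_eq_mul_div, le_div_iff₀ hA0]
    have h4 : ‖A‖/2 * Real.exp (k * δ * t) ≤ (|q| + C) * t ^ (a+b) :=
      le_trans (mul_le_mul_of_nonneg_left hEb (by positivity)) hbig
    nlinarith [h4]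
  have h5 := hR₁ t (lt_of_le_of_lt (le_trans (le_max_right _ _) (le_max_left _ _)) hz).le
  linarith
end

section
/- Assume that for some ε ∈ (0, 1) we have |g(z)| < ε |f(z)| for every z on the curve (so that f and f + g are nonzero on the curve). Then |Δarg(f + g, γ) − Δarg(f, γ)| < 4ε. -/
open Complex intervalIntegral

/-- If `‖w - 1‖ < ε < 1`, then `|arg w| < 2 * ε`. -/
lemma arg_lt_two_mul_of_norm_sub_one_lt {w : ℂ} {ε : ℝ} (hε0 : 0 < ε) (hε1 : ε < 1)
    (hw : ‖w - 1‖ < ε) : |Complex.arg w| < 2 * ε := by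
  have hre : 0 < w.re := by
    have h1 : |(w - 1).re| ≤ ‖w - 1‖ := Complex.abs_re_le_norm _
    have h2 : (w - 1).re = w.re - 1 := by simp
    rw [h2] at h1
    have := abs_le.1 h1
    linarith
  have hwne : w ≠ 0 := by
    intro h; rw [h] at hre; simp at hre
  have habs : 0 < ‖w‖ := norm_pos_iff.mpr hwne
  set θ := Complex.arg w with hθ
  have hθlt : |θ| < Real.pi / 2 :=
    Complex.abs_arg_lt_pi_div_two_iff.2 (Or.inl hre)
  -- key: |sin θ| < ε
  have hsin : |Real.sin θ| < ε := by
    have hs : Real.sin θ = w.im / ‖w‖ := Complex.sin_arg w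
    have hc : Real.cos θ = w.re / ‖w‖ := Complex.cos_arg hwne
    have him : w.im = ‖w‖ * Real.sin θ := by
      rw [hs]; field_simp
    have hre' : w.re = ‖w‖ * Real.cos θ := by
      rw [hc]; field_simp
    have hnorm : ‖w - 1‖ ^ 2 = (w.re - 1) ^ 2 + w.im ^ 2 := by
      rw [← Complex.normSq_eq_norm_sq, Complex.normSq_apply]
      simp [Complex.sub_re, Complex.sub_im]
      ring
    have hsc : Real.sin θ ^ 2 + Real.cos θ ^ 2 = 1 := Real.sin_sq_add_cos_sq θ
    have hkey : Real.sin θ ^ 2 ≤ ‖w - 1‖ ^ 2 := by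
      rw [hnorm, him, hre']
      nlinarith [sq_nonneg (‖w‖ - Real.cos θ)]
    have hn0 : (0:ℝ) ≤ ‖w - 1‖ := norm_nonneg _
    nlinarith [abs_nonneg (Real.sin θ), _root_.sq_abs (Real.sin θ)]
  -- now |θ| ≤ (π/2) * |sin θ| < (π/2) ε < 2 ε
  have hb := abs_le.1 hθlt.le
  have hπ0 : 0 < Real.pi := Real.pi_pos
  have hsinabs : Real.sin |θ| = |Real.sin θ| := by
    rcases abs_cases θ with ⟨h1, h2⟩ | ⟨h1, h2⟩
    · rw [h1, _root_.abs_of_nonneg (Real.sin_nonneg_of_nonneg_of_le_pi h2 (by linarith [hb.2]))]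
    · rw [h1, Real.sin_neg,
        _root_.abs_of_nonpos (Real.sin_nonpos_of_nonpos_of_neg_pi_le (le_of_lt h2) (by linarith [hb.1]))]
  have hmul : 2 / Real.pi * |θ| ≤ Real.sin |θ| :=
    Real.mul_le_sin (abs_nonneg θ) hθlt.le
  have hπ : 0 < Real.pi := Real.pi_pos
  have : 2 / Real.pi * |θ| < ε := by
    calc 2 / Real.pi * |θ| ≤ Real.sin |θ| := hmul
    _ = |Real.sin θ| := hsinabs
    _ < ε := hsin
  have hπ4 : Real.pi < 4 := by linarith [Real.pi_lt_d2]
  calc |θ| = Real.pi / 2 * (2 / Real.pi * |θ|) := by field_simp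
  _ < Real.pi / 2 * ε := by
      apply mul_lt_mul_of_pos_left this (by positivity)
  _ < 2 * ε := by nlinarith

/-- Let `γ` be a continuously differentiable curve on `[t₀, t₁]` whose image
lies in an open set `U`, and let `f, g` be holomorphic on `U`. If for some `ε ∈ (0,1)` we have
`|g| < ε |f|` along the curve, then the changes of argument
`Δarg(h, γ) = Im ∫_{t₀}^{t₁} h'(γ(t)) γ'(t) / h(γ(t)) dt` of `f + g` and of `f` along `γ`
differ by less than `4ε`. -/
theorem stmt_9 (t₀ t₁ : ℝ) (ht : t₀ < t₁) (γ : ℝ → ℂ)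
    (hγ : ContDiffOn ℝ 1 γ (Set.Icc t₀ t₁))
    (U : Set ℂ) (hU : IsOpen U) (hUγ : γ '' Set.Icc t₀ t₁ ⊆ U)
    (f g : ℂ → ℂ) (hf : DifferentiableOn ℂ f U) (hg : DifferentiableOn ℂ g U)
    (ε : ℝ) (hε0 : 0 < ε) (hε1 : ε < 1)
    (hfg : ∀ t ∈ Set.Icc t₀ t₁, ‖g (γ t)‖ < ε * ‖f (γ t)‖) :
    |(∫ t in t₀..t₁, deriv (fun z => f z + g z) (γ t) * deriv γ t / (f (γ t) + g (γ t))).im -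
      (∫ t in t₀..t₁, deriv f (γ t) * deriv γ t / f (γ t)).im| < 4 * ε := by
  have hmem : ∀ t ∈ Set.Icc t₀ t₁, γ t ∈ U := fun t htI => hUγ ⟨t, htI, rfl⟩
  -- nonvanishing
  have hfne : ∀ t ∈ Set.Icc t₀ t₁, f (γ t) ≠ 0 := by
    intro t htI h0
    have h1 := hfg t htI
    rw [h0] at h1
    rw [norm_zero, mul_zero] at h1
    linarith [norm_nonneg (g (γ t))]
  have hfpos : ∀ t ∈ Set.Icc t₀ t₁, 0 < ‖f (γ t)‖ :=
    fun t htI => norm_pos_iff.2 (hfne t htI)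
  have hψne : ∀ t ∈ Set.Icc t₀ t₁, f (γ t) + g (γ t) ≠ 0 := by
    intro t htI h0
    have h1 := hfg t htI
    have h2 : f (γ t) = -(g (γ t)) := by linear_combination h0
    rw [h2, norm_neg] at h1
    nlinarith [norm_nonneg (g (γ t))]
  -- w values
  set w : ℝ → ℂ := fun t => (f (γ t) + g (γ t)) / f (γ t) with hw_def
  have hw1 : ∀ t ∈ Set.Icc t₀ t₁, ‖w t - 1‖ < ε := by
    intro t htI
    have : w t - 1 = g (γ t) / f (γ t) := by
      show (f (γ t) + g (γ t)) / f (γ t) - 1 = _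
      rw [div_sub_one (hfne t htI)]
      ring
    rw [this, norm_div]
    rw [div_lt_iff₀ (hfpos t htI)]
    exact hfg t htI
  have hwslit : ∀ t ∈ Set.Icc t₀ t₁, w t ∈ Complex.slitPlane := by
    intro t htI
    apply Complex.mem_slitPlane_iff.2
    left
    have h1 : |(w t - 1).re| ≤ ‖w t - 1‖ := Complex.abs_re_le_norm _
    have h2 : (w t - 1).re = (w t).re - 1 := by simp
    rw [h2] at h1
    have := abs_le.1 h1
    have := hw1 t htI
    linarith
  -- derivative of γ within Icc
  set D : ℝ → ℂ := fun t => derivWithin γ (Set.Icc t₀ t₁) t with hD_def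
  have hDcont : ContinuousOn D (Set.Icc t₀ t₁) :=
    hγ.continuousOn_derivWithin (uniqueDiffOn_Icc ht) le_rfl
  have hγd : ∀ t ∈ Set.Ioo t₀ t₁, HasDerivAt γ (D t) t := by
    intro t htI
    have h1 : Set.Icc t₀ t₁ ∈ nhds t := Icc_mem_nhds htI.1 htI.2
    exact ((hγ.differentiableOn one_ne_zero t (Set.Ioo_subset_Icc_self htI)).hasDerivWithinAt).hasDerivAt h1
  -- analyticity for continuity of derivatives
  have hfa : AnalyticOnNhd ℂ f U := hf.analyticOnNhd hU
  have hga : AnalyticOnNhd ℂ g U := hg.analyticOnNhd hU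
  have hγc : ContinuousOn γ (Set.Icc t₀ t₁) := hγ.continuousOn
  have hmaps : Set.MapsTo γ (Set.Icc t₀ t₁) U := fun t htI => hmem t htI
  have hdfc : ContinuousOn (fun t => deriv f (γ t)) (Set.Icc t₀ t₁) :=
    (hfa.deriv.continuousOn).comp hγc hmaps
  have hdgc : ContinuousOn (fun t => deriv g (γ t)) (Set.Icc t₀ t₁) :=
    (hga.deriv.continuousOn).comp hγc hmaps
  have hfc : ContinuousOn (fun t => f (γ t)) (Set.Icc t₀ t₁) :=
    (hf.continuousOn).comp hγc hmaps
  have hgc : ContinuousOn (fun t => g (γ t)) (Set.Icc t₀ t₁) :=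
    (hg.continuousOn).comp hγc hmaps
  -- deriv of sum
  have hderivsum : ∀ t ∈ Set.Icc t₀ t₁,
      deriv (fun z => f z + g z) (γ t) = deriv f (γ t) + deriv g (γ t) := by
    intro t htI
    have h1 : DifferentiableAt ℂ f (γ t) := hf.differentiableAt (hU.mem_nhds (hmem t htI))
    have h2 : DifferentiableAt ℂ g (γ t) := hg.differentiableAt (hU.mem_nhds (hmem t htI))
    exact deriv_add h1 h2
  -- nice integrands
  set J₁ : ℝ → ℂ := fun t => deriv (fun z => f z + g z) (γ t) * D t / (f (γ t) + g (γ t))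
    with hJ₁_def
  set J₂ : ℝ → ℂ := fun t => deriv f (γ t) * D t / f (γ t) with hJ₂_def
  have hJ₁cont : ContinuousOn J₁ (Set.Icc t₀ t₁) := by
    apply ContinuousOn.div _ (hfc.add hgc) hψne
    have : ContinuousOn (fun t => deriv (fun z => f z + g z) (γ t)) (Set.Icc t₀ t₁) := by
      apply ContinuousOn.congr (hdfc.add hdgc)
      intro t htI
      exact hderivsum t htI
    exact this.mul hDcont
  have hJ₂cont : ContinuousOn J₂ (Set.Icc t₀ t₁) :=
    (hdfc.mul hDcont).div hfc hfne
  -- a.e. singleton avoidance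
  have hne : ∀ᵐ (t : ℝ), t ≠ t₁ := by
    have h0 : (MeasureTheory.volume : MeasureTheory.Measure ℝ) {t₁} = 0 :=
      MeasureTheory.measure_singleton t₁
    rw [MeasureTheory.ae_iff]
    convert h0 using 2
    ext x
    simp
  -- replace integrals
  have e1 : (∫ t in t₀..t₁, deriv (fun z => f z + g z) (γ t) * deriv γ t / (f (γ t) + g (γ t)))
      = ∫ t in t₀..t₁, J₁ t := by
    apply intervalIntegral.integral_congr_ae
    filter_upwards [hne] with t htne hmemI
    rw [Set.uIoc_of_le ht.le] at hmemI
    have htIoo : t ∈ Set.Ioo t₀ t₁ := ⟨hmemI.1, lt_of_le_of_ne hmemI.2 htne⟩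
    have : deriv γ t = D t := (hγd t htIoo).deriv
    rw [hJ₁_def]
    simp only [← this]
  have e2 : (∫ t in t₀..t₁, deriv f (γ t) * deriv γ t / f (γ t)) = ∫ t in t₀..t₁, J₂ t := by
    apply intervalIntegral.integral_congr_ae
    filter_upwards [hne] with t htne hmemI
    rw [Set.uIoc_of_le ht.le] at hmemI
    have htIoo : t ∈ Set.Ioo t₀ t₁ := ⟨hmemI.1, lt_of_le_of_ne hmemI.2 htne⟩
    have : deriv γ t = D t := (hγd t htIoo).deriv
    rw [hJ₂_def]
    simp only [← this]
  rw [e1, e2]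
  -- integrability
  have hIcc : Set.uIcc t₀ t₁ = Set.Icc t₀ t₁ := Set.uIcc_of_le ht.le
  have int1 : IntervalIntegrable J₁ MeasureTheory.volume t₀ t₁ :=
    (hJ₁cont.mono (by rw [hIcc])).intervalIntegrable
  have int2 : IntervalIntegrable J₂ MeasureTheory.volume t₀ t₁ :=
    (hJ₂cont.mono (by rw [hIcc])).intervalIntegrable
  -- FTC: the difference integral equals log (w t₁) - log (w t₀)
  set F : ℝ → ℂ := fun t => Complex.log (w t) with hF_def
  have hFcont : ContinuousOn F (Set.Icc t₀ t₁) := by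
    apply ContinuousOn.clog
    · exact (hfc.add hgc).div hfc hfne
    · exact hwslit
  have hFderiv : ∀ t ∈ Set.Ioo t₀ t₁, HasDerivWithinAt F (J₁ t - J₂ t) (Set.Ioi t) t := by
    intro t htIoo
    have htI : t ∈ Set.Icc t₀ t₁ := Set.Ioo_subset_Icc_self htIoo
    have hγt := hγd t htIoo
    have hfd : HasDerivAt f (deriv f (γ t)) (γ t) :=
      (hf.differentiableAt (hU.mem_nhds (hmem t htI))).hasDerivAt
    have hgd : HasDerivAt g (deriv g (γ t)) (γ t) :=
      (hg.differentiableAt (hU.mem_nhds (hmem t htI))).hasDerivAt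
    have hφt : HasDerivAt (fun s => f (γ s)) (deriv f (γ t) * D t) t := hfd.comp t hγt
    have hgt : HasDerivAt (fun s => g (γ s)) (deriv g (γ t) * D t) t := hgd.comp t hγt
    have hψt : HasDerivAt (fun s => f (γ s) + g (γ s))
        ((deriv f (γ t) + deriv g (γ t)) * D t) t := by
      exact (hφt.add hgt).congr_deriv (by ring)
    have hwt : HasDerivAt w
        (((deriv f (γ t) + deriv g (γ t)) * D t * f (γ t) -
          (f (γ t) + g (γ t)) * (deriv f (γ t) * D t)) / f (γ t) ^ 2) t :=
      hψt.div hφt (hfne t htI)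
    have hFt : HasDerivAt F
        ((((deriv f (γ t) + deriv g (γ t)) * D t * f (γ t) -
          (f (γ t) + g (γ t)) * (deriv f (γ t) * D t)) / f (γ t) ^ 2) / w t) t :=
      hwt.clog_real (hwslit t htI)
    have heq : (((deriv f (γ t) + deriv g (γ t)) * D t * f (γ t) -
          (f (γ t) + g (γ t)) * (deriv f (γ t) * D t)) / f (γ t) ^ 2) / w t
          = J₁ t - J₂ t := by
      simp only [hJ₁_def, hJ₂_def, hw_def]
      rw [hderivsum t htI]
      field_simp [hfne t htI, hψne t htI]
    rw [heq] at hFt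
    exact hFt.hasDerivWithinAt
  have hftc : (∫ t in t₀..t₁, (J₁ t - J₂ t)) = F t₁ - F t₀ :=
    intervalIntegral.integral_eq_sub_of_hasDeriv_right_of_le ht.le hFcont hFderiv
      (int1.sub int2)
  have hsub : (∫ t in t₀..t₁, J₁ t) - (∫ t in t₀..t₁, J₂ t) = F t₁ - F t₀ := by
    rw [← hftc, intervalIntegral.integral_sub int1 int2]
  -- conclude
  have him : (∫ t in t₀..t₁, J₁ t).im - (∫ t in t₀..t₁, J₂ t).im
      = (w t₁).arg - (w t₀).arg := by
    have : ((∫ t in t₀..t₁, J₁ t) - (∫ t in t₀..t₁, J₂ t)).im = (F t₁ - F t₀).im := by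
      rw [hsub]
    simpa [Complex.sub_im, hF_def, Complex.log_im] using this
  rw [him]
  have ht₀I : t₀ ∈ Set.Icc t₀ t₁ := Set.left_mem_Icc.2 ht.le
  have ht₁I : t₁ ∈ Set.Icc t₀ t₁ := Set.right_mem_Icc.2 ht.le
  have b1 : |(w t₁).arg| < 2 * ε :=
    arg_lt_two_mul_of_norm_sub_one_lt hε0 hε1 (hw1 t₁ ht₁I)
  have b0 : |(w t₀).arg| < 2 * ε :=
    arg_lt_two_mul_of_norm_sub_one_lt hε0 hε1 (hw1 t₀ ht₀I)
  calc |(w t₁).arg - (w t₀).arg| ≤ |(w t₁).arg| + |(w t₀).arg| := abs_sub _ _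
  _ < 2 * ε + 2 * ε := add_lt_add b1 b0
  _ = 4 * ε := by ring
end

section
/- For every α ∈ (0, 1) and every z ∈ ℂ with Re z > 0, the integral ∫_{−∞}^0 (e^{zx} − 1) |x|^{−1−α} dx converges absolutely and α ∫_{−∞}^0 (e^{zx} − 1) |x|^{−1−α} dx = −Γ(1 − α) z^{α}. -/
open MeasureTheory Complex

open Set Real Filter

set_option maxHeartbeats 1000000

lemma meas_aux (s w : ℂ) : AEStronglyMeasurable (fun t : ℝ => (t : ℂ) ^ s * Complex.exp (-(w * t)))
    (volume.restrict (Ioi 0)) := by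
  apply ContinuousOn.aestronglyMeasurable ?_ measurableSet_Ioi
  apply ContinuousOn.mul
  · intro t ht
    exact (Complex.continuousAt_ofReal_cpow_const _ _ (Or.inr (by
      exact_mod_cast (ne_of_gt ht)))).continuousWithinAt
  · exact (Complex.continuous_exp.comp (continuous_const.mul continuous_ofReal).neg).continuousOn

lemma int_aux {s : ℂ} (hs : -1 < s.re) {w : ℂ} (hw : 0 < w.re) :
    IntegrableOn (fun t : ℝ => (t : ℂ) ^ s * Complex.exp (-(w * t))) (Ioi 0) := by
  have hb : IntegrableOn (fun t : ℝ => t ^ s.re * Real.exp (-w.re * t)) (Ioi 0) := by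
    simpa using integrableOn_rpow_mul_exp_neg_mul_rpow hs zero_lt_one hw
  refine hb.mono' (meas_aux s w) ?_
  filter_upwards [ae_restrict_mem measurableSet_Ioi] with t ht
  rw [norm_mul]
  have h1 : ‖(t : ℂ) ^ s‖ = t ^ s.re := by
    rw [Complex.norm_cpow_eq_rpow_re_of_pos ht]
  have h2 : ‖Complex.exp (-(w * t))‖ = Real.exp (-w.re * t) := by
    rw [Complex.norm_exp]
    simp [mul_comm]
  rw [h1, h2]

lemma F_hasDeriv {a : ℂ} (ha : 0 < a.re) {w : ℂ} (hw : 0 < w.re) :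
    DifferentiableAt ℂ (fun w : ℂ => ∫ t : ℝ in Ioi 0, (t : ℂ) ^ (a - 1) * Complex.exp (-(w * t))) w := by
  have ha' : (-1 : ℝ) < (a - 1).re := by simp only [Complex.sub_re, Complex.one_re]; linarith
  set ε : ℝ := w.re / 2 with hε
  have hε0 : 0 < ε := by positivity
  have hmeasF : ∀ᶠ w' in nhds w, AEStronglyMeasurable
      (fun t : ℝ => (t : ℂ) ^ (a - 1) * Complex.exp (-(w' * t))) (volume.restrict (Ioi 0)) :=
    Filter.Eventually.of_forall fun w' => meas_aux _ _
  have hintF : Integrable (fun t : ℝ => (t : ℂ) ^ (a - 1) * Complex.exp (-(w * t)))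
      (volume.restrict (Ioi 0)) := int_aux ha' hw
  have hmeasF' : AEStronglyMeasurable
      (fun t : ℝ => (t : ℂ) ^ (a - 1) * (Complex.exp (-(w * t)) * (-(t:ℂ))))
      (volume.restrict (Ioi 0)) := by
    have : AEStronglyMeasurable (fun t : ℝ => -((t : ℂ) ^ a * Complex.exp (-(w * t))))
        (volume.restrict (Ioi 0)) := (meas_aux a w).neg
    refine this.congr ?_
    filter_upwards [ae_restrict_mem measurableSet_Ioi] with t ht
    have htne : (t : ℂ) ≠ 0 := by exact_mod_cast ne_of_gt ht
    rw [show a = (a - 1) + 1 by ring, Complex.cpow_add _ _ htne, Complex.cpow_one]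
    ring_nf
  have hbound : ∀ᵐ (t : ℝ) ∂(volume.restrict (Ioi 0)), ∀ w' ∈ Metric.ball w ε,
      ‖(t : ℂ) ^ (a - 1) * (Complex.exp (-(w' * t)) * (-(t:ℂ)))‖ ≤ t ^ a.re * Real.exp (-ε * t) := by
    filter_upwards [ae_restrict_mem measurableSet_Ioi] with t ht w' hw'
    have hw're : ε ≤ w'.re := by
      have h1 : |w'.re - w.re| ≤ ‖w' - w‖ := by
        simpa [Complex.sub_re] using Complex.abs_re_le_norm (w' - w)
      have hlt : ‖w' - w‖ < ε := by
        simpa [Metric.mem_ball, Complex.dist_eq] using hw'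
      have := abs_lt.mp (lt_of_le_of_lt h1 hlt)
      simp only [hε] at this ⊢
      linarith [this.1]
    rw [norm_mul, norm_mul]
    have h1 : ‖(t : ℂ) ^ (a-1)‖ = t ^ (a.re - 1) := by
      rw [Complex.norm_cpow_eq_rpow_re_of_pos ht]
      norm_num
    have h2 : ‖Complex.exp (-(w' * t))‖ = Real.exp (-(w'.re * t)) := by
      rw [Complex.norm_exp]
      norm_num
    have h3 : ‖(-(t:ℂ))‖ = t := by
      rw [norm_neg, Complex.norm_real, Real.norm_eq_abs, abs_of_pos ht]
    rw [h1, h2, h3]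
    have hpow : t ^ (a.re - 1) * t = t ^ a.re := by
      rw [← Real.rpow_add_one (ne_of_gt ht)]
      norm_num
    have h4 : t ^ (a.re - 1) * (Real.exp (-(w'.re * t)) * t) = t ^ a.re * Real.exp (-(w'.re * t)) := by
      rw [mul_comm (Real.exp _) t, ← mul_assoc, hpow]
    rw [h4]
    have h5 : Real.exp (-(w'.re * t)) ≤ Real.exp (-ε * t) := by
      apply Real.exp_le_exp.mpr
      nlinarith [mul_le_mul_of_nonneg_right hw're ht.le]
    have h6 : (0:ℝ) ≤ t ^ a.re := Real.rpow_nonneg ht.le _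
    nlinarith
  have hbint : Integrable (fun t : ℝ => t ^ a.re * Real.exp (-ε * t)) (volume.restrict (Ioi 0)) := by
    have h := integrableOn_rpow_mul_exp_neg_mul_rpow (by linarith : (-1:ℝ) < a.re) zero_lt_one hε0
    simp only [Real.rpow_one, neg_mul] at h ⊢
    exact h
  have hderiv : ∀ᵐ (t : ℝ) ∂(volume.restrict (Ioi 0)), ∀ w' ∈ Metric.ball w ε,
      HasDerivAt (fun w'' : ℂ => (t : ℂ) ^ (a - 1) * Complex.exp (-(w'' * t)))
        ((t : ℂ) ^ (a - 1) * (Complex.exp (-(w' * t)) * (-(t:ℂ)))) w' := by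
    filter_upwards with t w' _
    have h0 : HasDerivAt (fun w'' : ℂ => -(w'' * (t:ℂ))) (-(t:ℂ)) w' := by
      have h := ((hasDerivAt_id w').mul_const (t:ℂ)).neg
      simp only [id_eq, one_mul] at h
      exact h
    exact h0.cexp.const_mul _
  have key := hasDerivAt_integral_of_dominated_loc_of_deriv_le (Metric.ball_mem_nhds w hε0) hmeasF hintF hmeasF'
    hbound hbint hderiv
  exact key.2.differentiableAt

lemma laplace_eq {a : ℂ} (ha : 0 < a.re) {z : ℂ} (hz : 0 < z.re) :
    ∫ t : ℝ in Ioi 0, (t : ℂ) ^ (a - 1) * Complex.exp (-(z * t)) =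
      Complex.Gamma a * z ^ (-a) := by
  set U : Set ℂ := {w : ℂ | 0 < w.re} with hU
  have hUopen : IsOpen U := isOpen_lt continuous_const Complex.continuous_re
  have hUconn : IsPreconnected U := (convex_halfSpace_re_gt 0).isPreconnected
  set F : ℂ → ℂ := fun w => ∫ t : ℝ in Ioi 0, (t : ℂ) ^ (a - 1) * Complex.exp (-(w * t)) with hF
  set G : ℂ → ℂ := fun w => Complex.Gamma a * w ^ (-a) with hG
  have hFan : AnalyticOnNhd ℂ F U := by
    apply DifferentiableOn.analyticOnNhd ?_ hUopen
    exact fun w hw => (F_hasDeriv ha hw).differentiableWithinAt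
  have hGan : AnalyticOnNhd ℂ G U := by
    apply DifferentiableOn.analyticOnNhd ?_ hUopen
    intro w hw
    refine DifferentiableAt.differentiableWithinAt ?_
    exact (differentiableAt_id.cpow (differentiableAt_const _) (Or.inl hw)).const_mul _
  have hreal : ∀ r : ℝ, 0 < r → F (r : ℂ) = G (r : ℂ) := by
    intro r hr
    have := Complex.integral_cpow_mul_exp_neg_mul_Ioi ha hr
    rw [hF, hG]
    simp only []
    rw [this]
    rw [mul_comm]
    congr 1
    rw [Complex.cpow_neg, one_div, Complex.inv_cpow]
    exact fun h => by
      have : Complex.arg (r : ℂ) = 0 := Complex.arg_ofReal_of_nonneg hr.le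
      rw [this] at h; exact Real.pi_ne_zero h.symm
  have hmem : (1 : ℂ) ∈ U := by simp [hU]
  have hfreq : ∃ᶠ w in nhdsWithin (1 : ℂ) {(1:ℂ)}ᶜ, F w = G w := by
    have hseq : Filter.Tendsto (fun n : ℕ => ((1 + (n+1:ℝ)⁻¹ : ℝ) : ℂ)) Filter.atTop
        (nhdsWithin (1 : ℂ) {(1:ℂ)}ᶜ) := by
      rw [tendsto_nhdsWithin_iff]
      constructor
      · have : Filter.Tendsto (fun n : ℕ => (1 + (n+1:ℝ)⁻¹ : ℝ)) Filter.atTop (nhds 1) := by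
          simpa using tendsto_const_nhds.add (tendsto_one_div_add_atTop_nhds_zero_nat (𝕜 := ℝ))
        exact (Complex.continuous_ofReal.tendsto 1).comp this
      · filter_upwards with n
        simp only [Set.mem_compl_iff, Set.mem_singleton_iff]
        intro h
        have : (1 + (n+1:ℝ)⁻¹ : ℝ) = 1 := by exact_mod_cast h
        have hn : (0:ℝ) < (n+1:ℝ)⁻¹ := by positivity
        linarith
    apply hseq.frequently
    apply Filter.Eventually.frequently
    filter_upwards with n
    apply hreal
    positivity
  have := hFan.eqOn_of_preconnected_of_frequently_eq hGan hUconn hmem hfreq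
  exact this hz

lemma cexp_one_bound {z : ℂ} (hz : 0 ≤ z.re) {t : ℝ} (ht : 0 ≤ t) :
    ‖Complex.exp (-(z * t)) - 1‖ ≤ ‖z‖ * t := by
  have key : ∀ x ∈ Icc (0:ℝ) t, HasDerivWithinAt (fun u : ℝ => Complex.exp (-(z * u)))
      (Complex.exp (-(z * x)) * (-z)) (Icc 0 t) x := by
    intro x hx
    have h0 : HasDerivAt (fun u : ℝ => -(z * (u:ℂ))) (-z) x := by
      have h := ((Complex.ofRealCLM.hasDerivAt (x := x)).const_mul z).neg
      simp only [Complex.ofRealCLM_apply, Complex.ofReal_one, mul_one] at h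
      exact h
    exact h0.cexp.hasDerivWithinAt
  have hb : ∀ x ∈ Icc (0:ℝ) t, ‖Complex.exp (-(z * x)) * (-z)‖ ≤ ‖z‖ := by
    intro x hx
    rw [norm_mul, norm_neg]
    have : ‖Complex.exp (-(z * x))‖ ≤ 1 := by
      rw [Complex.norm_exp]
      apply Real.exp_le_one_iff.mpr
      simp only [Complex.neg_re, Complex.mul_re, Complex.ofReal_re, Complex.ofReal_im]
      nlinarith [hx.1]
    nlinarith [norm_nonneg z]
  have := (convex_Icc (0:ℝ) t).norm_image_sub_le_of_norm_hasDerivWithin_le key hb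
    (left_mem_Icc.mpr ht) (right_mem_Icc.mpr ht)
  simpa [Real.dist_eq, _root_.abs_of_nonneg ht] using this

section main
variable {α : ℝ} (hα0 : 0 < α) (hα1 : α < 1) {z : ℂ} (hz : 0 < z.re)

include hα0 hα1 hz in
lemma J_int : IntegrableOn
    (fun t : ℝ => (Complex.exp (-(z * t)) - 1) * ((t ^ (-1 - α) : ℝ) : ℂ)) (Ioi 0) := by
  have hmeas : ∀ s : Set ℝ, s ⊆ Ioi 0 → MeasurableSet s → AEStronglyMeasurable
      (fun t : ℝ => (Complex.exp (-(z * t)) - 1) * ((t ^ (-1 - α) : ℝ) : ℂ))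
      (volume.restrict s) := by
    intro s hs hsm
    apply ContinuousOn.aestronglyMeasurable ?_ hsm
    apply ContinuousOn.mono ?_ hs
    apply ContinuousOn.mul
    · exact ((Complex.continuous_exp.comp
        (continuous_const.mul Complex.continuous_ofReal).neg).sub continuous_const).continuousOn
    · intro t ht
      exact (Complex.continuous_ofReal.continuousAt.comp
        (Real.continuousAt_rpow_const t _ (Or.inl (ne_of_gt ht)))).continuousWithinAt
  rw [show Ioi (0:ℝ) = Ioc 0 1 ∪ Ioi 1 from (Ioc_union_Ioi_eq_Ioi zero_le_one).symm]
  apply IntegrableOn.union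
  · -- on Ioc 0 1
    have hb : IntegrableOn (fun t : ℝ => ‖z‖ * t ^ (-α)) (Ioc 0 1) := by
      apply Integrable.const_mul
      exact (intervalIntegral.intervalIntegrable_rpow' (by linarith : (-1:ℝ) < -α) (a := 0) (b := 1)).1
    refine hb.mono' (hmeas _ Ioc_subset_Ioi_self measurableSet_Ioc) ?_
    filter_upwards [ae_restrict_mem measurableSet_Ioc] with t ht
    rw [norm_mul]
    have h2 : ‖((t ^ (-1 - α) : ℝ) : ℂ)‖ = t ^ (-1 - α) := by
      rw [Complex.norm_real, Real.norm_eq_abs, _root_.abs_of_nonneg (Real.rpow_nonneg ht.1.le _)]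
    rw [h2]
    have h1 : ‖Complex.exp (-(z * t)) - 1‖ ≤ ‖z‖ * t := cexp_one_bound hz.le ht.1.le
    have h3 : t * t ^ (-1 - α) = t ^ (-α) := by
      rw [mul_comm, ← Real.rpow_add_one (ne_of_gt ht.1)]
      ring_nf
    calc ‖Complex.exp (-(z * t)) - 1‖ * t ^ (-1-α) ≤ (‖z‖ * t) * t ^ (-1-α) := by
          apply mul_le_mul_of_nonneg_right h1 (Real.rpow_nonneg ht.1.le _)
      _ = ‖z‖ * t ^ (-α) := by rw [mul_assoc, h3]
  · -- on Ioi 1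
    have hb : IntegrableOn (fun t : ℝ => 2 * t ^ (-1 - α)) (Ioi 1) :=
      (integrableOn_Ioi_rpow_of_lt (by linarith) one_pos).const_mul 2
    refine hb.mono' (hmeas _ (Ioi_subset_Ioi zero_le_one) measurableSet_Ioi) ?_
    filter_upwards [ae_restrict_mem measurableSet_Ioi] with t ht
    have ht0 : (0:ℝ) < t := lt_trans one_pos ht
    rw [norm_mul]
    have h2 : ‖((t ^ (-1 - α) : ℝ) : ℂ)‖ = t ^ (-1 - α) := by
      rw [Complex.norm_real, Real.norm_eq_abs, _root_.abs_of_nonneg (Real.rpow_nonneg ht0.le _)]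
    rw [h2]
    have h1 : ‖Complex.exp (-(z * t)) - 1‖ ≤ 2 := by
      calc ‖Complex.exp (-(z * t)) - 1‖ ≤ ‖Complex.exp (-(z * t))‖ + 1 := by
            simpa using norm_sub_le (Complex.exp (-(z * t))) 1
        _ ≤ 2 := by
            have : ‖Complex.exp (-(z * t))‖ ≤ 1 := by
              rw [Complex.norm_exp]
              apply Real.exp_le_one_iff.mpr
              simp only [Complex.neg_re, Complex.mul_re, Complex.ofReal_re, Complex.ofReal_im]
              nlinarith
            linarith
    exact mul_le_mul_of_nonneg_right h1 (Real.rpow_nonneg ht0.le _)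

end main

section main2
variable {α : ℝ} (hα0 : 0 < α) (hα1 : α < 1) {z : ℂ} (hz : 0 < z.re)

include hα0 hα1 hz in
lemma key_eq : (α:ℂ) * (∫ t in Ioi (0:ℝ), (Complex.exp (-(z * t)) - 1) * ((t ^ (-1 - α) : ℝ) : ℂ))
    = -((Real.Gamma (1 - α) : ℂ)) * z ^ ((α : ℂ)) := by
  have hzne : z ≠ 0 := fun h => by simp [h] at hz
  set Φ : ℝ → ℂ := fun t => -((Complex.exp (-(z * t)) - 1) * ((t ^ (-α) : ℝ) : ℂ)) with hΦ
  set D : ℝ → ℂ := fun t => z * (Complex.exp (-(z * t)) * ((t ^ (-α) : ℝ) : ℂ)) +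
    (α:ℂ) * ((Complex.exp (-(z * t)) - 1) * ((t ^ (-1 - α) : ℝ) : ℂ)) with hD
  have hD1 : IntegrableOn (fun t : ℝ => Complex.exp (-(z * t)) * ((t ^ (-α) : ℝ) : ℂ)) (Ioi 0) := by
    refine (int_aux (s := ((-α : ℝ) : ℂ)) (by simp; linarith) hz).congr ?_
    filter_upwards [ae_restrict_mem measurableSet_Ioi] with t ht
    rw [Complex.ofReal_cpow (le_of_lt ht), mul_comm]
  have hD2 : IntegrableOn
      (fun t : ℝ => (Complex.exp (-(z * t)) - 1) * ((t ^ (-1 - α) : ℝ) : ℂ)) (Ioi 0) :=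
    J_int hα0 hα1 hz
  have hDint : IntegrableOn D (Ioi 0) := (hD1.const_mul z).add (hD2.const_mul (α:ℂ))
  have hΦderiv : ∀ t : ℝ, 0 < t → HasDerivAt Φ (D t) t := by
    intro t ht
    have hA : HasDerivAt (fun u : ℝ => Complex.exp (-(z * u)) - 1)
        (Complex.exp (-(z * t)) * (-z)) t := by
      have h0 : HasDerivAt (fun u : ℝ => -(z * (u:ℂ))) (-z) t := by
        have h := ((Complex.ofRealCLM.hasDerivAt (x := t)).const_mul z).neg
        simp only [Complex.ofRealCLM_apply, Complex.ofReal_one, mul_one] at h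
        exact h
      simpa using h0.cexp.sub_const 1
    have hB : HasDerivAt (fun u : ℝ => ((u ^ (-α) : ℝ) : ℂ)) ((((-α) * t ^ (-α - 1) : ℝ)) : ℂ) t :=
      (Real.hasDerivAt_rpow_const (Or.inl (ne_of_gt ht))).ofReal_comp
    have := (hA.mul hB).neg
    refine this.congr_deriv ?_
    rw [hD]
    have hre : t ^ (-1 - α) = t ^ (-α - 1) := by ring_nf
    simp only [hre]
    push_cast
    ring
  have hΦtop : Tendsto Φ atTop (nhds 0) := by
    apply squeeze_zero_norm' (a := fun t : ℝ => 2 * t ^ (-α))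
    · filter_upwards [Filter.eventually_gt_atTop (0:ℝ)] with t ht
      rw [hΦ]
      simp only [norm_neg, norm_mul]
      have h2 : ‖((t ^ (-α) : ℝ) : ℂ)‖ = t ^ (-α) := by
        rw [Complex.norm_real, Real.norm_eq_abs, _root_.abs_of_nonneg (Real.rpow_nonneg ht.le _)]
      rw [h2]
      have h1 : ‖Complex.exp (-(z * t)) - 1‖ ≤ 2 := by
        calc ‖Complex.exp (-(z * t)) - 1‖ ≤ ‖Complex.exp (-(z * t))‖ + 1 := by
              simpa using norm_sub_le (Complex.exp (-(z * t))) 1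
          _ ≤ 2 := by
              have : ‖Complex.exp (-(z * t))‖ ≤ 1 := by
                rw [Complex.norm_exp]
                apply Real.exp_le_one_iff.mpr
                simp only [Complex.neg_re, Complex.mul_re, Complex.ofReal_re, Complex.ofReal_im]
                nlinarith
              linarith
      exact mul_le_mul_of_nonneg_right h1 (Real.rpow_nonneg ht.le _)
    · simpa using (tendsto_rpow_neg_atTop hα0).const_mul (2:ℝ)
  set a : ℕ → ℝ := fun n => ((n:ℝ) + 1)⁻¹ with ha_def
  have ha_pos : ∀ n, 0 < a n := fun n => by positivity
  have ha0 : Tendsto a atTop (nhds 0) := by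
    simpa [ha_def, one_div] using tendsto_one_div_add_atTop_nhds_zero_nat (𝕜 := ℝ)
  have hFTC : ∀ n, ∫ t in Ioi (a n), D t = 0 - Φ (a n) := by
    intro n
    refine integral_Ioi_of_hasDerivAt_of_tendsto'
      (fun x hx => hΦderiv x (lt_of_lt_of_le (ha_pos n) hx)) ?_ hΦtop
    exact hDint.mono_set (Ioi_subset_Ioi (ha_pos n).le)
  have hΦa : Tendsto (fun n => Φ (a n)) atTop (nhds 0) := by
    apply squeeze_zero_norm' (a := fun n => ‖z‖ * (a n) ^ (1 - α))
    · filter_upwards with n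
      have ht : 0 < a n := ha_pos n
      rw [hΦ]
      simp only [norm_neg, norm_mul]
      have h2 : ‖((a n ^ (-α) : ℝ) : ℂ)‖ = a n ^ (-α) := by
        rw [Complex.norm_real, Real.norm_eq_abs, _root_.abs_of_nonneg (Real.rpow_nonneg ht.le _)]
      rw [h2]
      have h1 : ‖Complex.exp (-(z * (a n))) - 1‖ ≤ ‖z‖ * a n := cexp_one_bound hz.le ht.le
      have h3 : a n * a n ^ (-α) = a n ^ (1 - α) := by
        rw [mul_comm, ← Real.rpow_add_one (ne_of_gt ht)]
        ring_nf
      calc ‖Complex.exp (-(z * (a n))) - 1‖ * a n ^ (-α) ≤ (‖z‖ * a n) * a n ^ (-α) :=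
            mul_le_mul_of_nonneg_right h1 (Real.rpow_nonneg ht.le _)
        _ = ‖z‖ * a n ^ (1 - α) := by rw [mul_assoc, h3]
    · have hc : Tendsto (fun n => (a n) ^ (1 - α)) atTop (nhds ((0:ℝ) ^ (1 - α))) :=
        ((Real.continuousAt_rpow_const 0 (1 - α) (Or.inr (by linarith))).tendsto).comp ha0
      rw [Real.zero_rpow (by intro h; linarith : (1:ℝ) - α ≠ 0)] at hc
      simpa using hc.const_mul ‖z‖
  have cover : AECover (volume.restrict (Ioi (0:ℝ))) atTop (fun n => Ioi (a n)) :=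
    aecover_Ioi_of_Ioi ha0
  have hres : ∀ n, ∫ t in Ioi (a n), D t ∂(volume.restrict (Ioi 0)) = ∫ t in Ioi (a n), D t := by
    intro n
    rw [Measure.restrict_restrict measurableSet_Ioi]
    congr 1
    rw [Ioi_inter_Ioi, max_eq_left (ha_pos n).le]
  have hall : ∫ t in Ioi (0:ℝ), D t = 0 := by
    refine cover.integral_eq_of_tendsto 0 hDint ?_
    have : Tendsto (fun n => 0 - Φ (a n)) atTop (nhds 0) := by
      simpa using hΦa.neg
    apply this.congr'
    filter_upwards with n
    rw [hres n, hFTC n]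
  have hI1 : ∫ t in Ioi (0:ℝ), Complex.exp (-(z * t)) * ((t ^ (-α) : ℝ) : ℂ) =
      Complex.Gamma ((1 - α : ℝ) : ℂ) * z ^ (-(((1 - α : ℝ)) : ℂ)) := by
    rw [← laplace_eq (a := ((1 - α : ℝ) : ℂ)) (by simp; linarith) hz]
    apply setIntegral_congr_fun measurableSet_Ioi
    intro t ht
    show Complex.exp (-(z * t)) * ((t ^ (-α) : ℝ) : ℂ) =
      (t:ℂ) ^ (((1 - α : ℝ) : ℂ) - 1) * Complex.exp (-(z * t))
    rw [show ((1 - α : ℝ) : ℂ) - 1 = ((-α : ℝ) : ℂ) by push_cast; ring,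
      ← Complex.ofReal_cpow (le_of_lt ht), mul_comm]
  have hsplit : ∫ t in Ioi (0:ℝ), D t =
      z * (∫ t in Ioi (0:ℝ), Complex.exp (-(z * t)) * ((t ^ (-α) : ℝ) : ℂ)) +
      (α:ℂ) * (∫ t in Ioi (0:ℝ), (Complex.exp (-(z * t)) - 1) * ((t ^ (-1 - α) : ℝ) : ℂ)) := by
    rw [hD]
    rw [integral_add (hD1.const_mul z) (hD2.const_mul (α:ℂ)), integral_const_mul,
      integral_const_mul]
  rw [hall, hI1] at hsplit
  have hzP : z * z ^ (-(((1 - α : ℝ)) : ℂ)) = z ^ ((α:ℂ)) := by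
    rw [show ((α:ℂ)) = 1 + (-(((1 - α : ℝ)) : ℂ)) by push_cast; ring,
      Complex.cpow_add _ _ hzne, Complex.cpow_one]
  have : (α:ℂ) * (∫ t in Ioi (0:ℝ), (Complex.exp (-(z * t)) - 1) * ((t ^ (-1 - α) : ℝ) : ℂ)) =
      -(Complex.Gamma ((1 - α : ℝ) : ℂ) * (z * z ^ (-(((1 - α : ℝ)) : ℂ)))) := by
    linear_combination -hsplit
  rw [hzP, Complex.Gamma_ofReal] at this
  rw [this]
  ring

end main2

/-- For every `α ∈ (0,1)` and every `z ∈ ℂ` with `Re z > 0`, the integral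
`∫_{-∞}^0 (e^{zx} - 1) |x|^{-1-α} dx` converges absolutely and
`α ∫_{-∞}^0 (e^{zx} - 1) |x|^{-1-α} dx = -Γ(1-α) z^α` (principal complex power). -/
theorem stmt_12 (α : ℝ) (hα0 : 0 < α) (hα1 : α < 1) (z : ℂ) (hz : 0 < z.re) :
    IntegrableOn (fun x : ℝ =>
      (Complex.exp (z * (x : ℂ)) - 1) * ((|x| ^ (-1 - α) : ℝ) : ℂ)) (Set.Iio 0) ∧
    (α : ℂ) * (∫ x in Set.Iio (0 : ℝ),
        (Complex.exp (z * (x : ℂ)) - 1) * ((|x| ^ (-1 - α) : ℝ) : ℂ)) =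
      -((Real.Gamma (1 - α) : ℂ)) * z ^ ((α : ℂ)) := by
  have hJ : IntegrableOn
      (fun t : ℝ => (Complex.exp (-(z * t)) - 1) * ((|t| ^ (-1 - α) : ℝ) : ℂ)) (Ioi 0) := by
    apply (J_int hα0 hα1 hz).congr
    filter_upwards [ae_restrict_mem measurableSet_Ioi] with t ht
    rw [abs_of_pos ht]
  constructor
  · refine ((Measure.measurePreserving_neg (volume : Measure ℝ)).integrableOn_comp_preimage
      (Homeomorph.neg ℝ).measurableEmbedding).mp ?_
    simp only [Function.comp_def, neg_preimage, neg_Iio, neg_zero]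
    simpa [Complex.ofReal_neg, mul_neg, abs_neg] using hJ
  · have h1 : (∫ x in Iio (0:ℝ), (Complex.exp (z * (x : ℂ)) - 1) * ((|x| ^ (-1 - α) : ℝ) : ℂ)) =
        ∫ x in Ioi (0:ℝ), (Complex.exp (-(z * x)) - 1) * ((x ^ (-1 - α) : ℝ) : ℂ) := by
      rw [← integral_Iic_eq_integral_Iio]
      rw [show Iic (0:ℝ) = Iic (-0) by rw [neg_zero], ← integral_comp_neg_Ioi]
      apply setIntegral_congr_fun measurableSet_Ioi
      intro x hx
      show (Complex.exp (z * ((-x : ℝ) : ℂ)) - 1) * ((|(-x)| ^ (-1 - α) : ℝ) : ℂ) =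
        (Complex.exp (-(z * x)) - 1) * ((x ^ (-1 - α) : ℝ) : ℂ)
      rw [abs_neg, abs_of_pos hx, Complex.ofReal_neg, mul_neg]
    rw [h1]
    exact key_eq hα0 hα1 hz
end

section
/- Let k > 0 and let α < 1 with α ≠ 0. For every z ∈ ℂ the integral ∫_0^k (e^{zx} − 1) x^{−1−α} dx converges absolutely and α ∫_0^k (e^{zx} − 1) x^{−1−α} dx = Σ_{n=1}^∞ α k^{n−α} z^n / (n! (n − α)), where the series on the right converges absolutely for every z ∈ ℂ. -/
open MeasureTheory Complex

lemma hasSum_exp_shift (w : ℂ) :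
    HasSum (fun n : ℕ => w ^ (n + 1) / (Nat.factorial (n + 1) : ℂ)) (Complex.exp w - 1) := by
  have h : HasSum (fun n : ℕ => w ^ n / (Nat.factorial n : ℂ)) (Complex.exp w) := by
    have := NormedSpace.expSeries_div_hasSum_exp w
    rwa [← Complex.exp_eq_exp_ℂ] at this
  refine (hasSum_nat_add_iff (f := fun n : ℕ => w ^ n / (Nat.factorial n : ℂ)) 1).mpr ?_
  simpa using h

lemma hasSum_rexp_shift (t : ℝ) :
    HasSum (fun n : ℕ => t ^ (n + 1) / (Nat.factorial (n + 1) : ℝ)) (Real.exp t - 1) := by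
  have h : HasSum (fun n : ℕ => t ^ n / (Nat.factorial n : ℝ)) (Real.exp t) := by
    have := NormedSpace.expSeries_div_hasSum_exp t
    rwa [← Real.exp_eq_exp_ℝ] at this
  refine (hasSum_nat_add_iff (f := fun n : ℕ => t ^ n / (Nat.factorial n : ℝ)) 1).mpr ?_
  simpa using h

lemma norm_exp_sub_one_le' (w : ℂ) : ‖Complex.exp w - 1‖ ≤ ‖w‖ * Real.exp ‖w‖ := by
  have h1 := hasSum_exp_shift w
  have h2 := hasSum_rexp_shift ‖w‖
  have hnorm : ∀ n : ℕ, ‖w ^ (n+1) / (Nat.factorial (n+1) : ℂ)‖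
      = ‖w‖ ^ (n+1) / (Nat.factorial (n+1) : ℝ) := by
    intro n
    rw [norm_div, norm_pow]
    simp
  have hle : ‖Complex.exp w - 1‖ ≤ Real.exp ‖w‖ - 1 := by
    calc ‖Complex.exp w - 1‖ = ‖∑' n : ℕ, w ^ (n+1) / (Nat.factorial (n+1) : ℂ)‖ := by
          rw [h1.tsum_eq]
      _ ≤ ∑' n : ℕ, ‖w ^ (n+1) / (Nat.factorial (n+1) : ℂ)‖ :=
          norm_tsum_le_tsum_norm (by simpa only [hnorm] using h2.summable)
      _ = Real.exp ‖w‖ - 1 := by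
          rw [← h2.tsum_eq]; exact tsum_congr hnorm
  have hexp : Real.exp ‖w‖ - 1 ≤ ‖w‖ * Real.exp ‖w‖ := by
    have h := mul_le_mul_of_nonneg_right (Real.add_one_le_exp (-‖w‖)) (Real.exp_pos ‖w‖).le
    rw [← Real.exp_add] at h
    simp only [neg_add_cancel, Real.exp_zero] at h
    nlinarith
  linarith

set_option maxHeartbeats 1000000 in
/-- Let `k > 0` and `α < 1`, `α ≠ 0`. For every `z ∈ ℂ` the integral
`∫_0^k (e^{zx} - 1) x^{-1-α} dx` converges absolutely and
`α ∫_0^k (e^{zx} - 1) x^{-1-α} dx = Σ_{n≥1} α k^{n-α} z^n / (n! (n-α))`, the series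
converging absolutely for every `z ∈ ℂ`. -/
theorem stmt_13 (k α : ℝ) (hk : 0 < k) (hα1 : α < 1) (hα0 : α ≠ 0) (z : ℂ) :
    IntegrableOn (fun x : ℝ =>
      (Complex.exp (z * (x : ℂ)) - 1) * ((x ^ (-1 - α) : ℝ) : ℂ)) (Set.Ioc 0 k) ∧
    Summable (fun n : ℕ =>
      ‖((α * k ^ (((n : ℝ) + 1) - α) / ((Nat.factorial (n + 1) : ℝ) * (((n : ℝ) + 1) - α)) : ℝ) : ℂ)
        * z ^ (n + 1)‖) ∧
    (α : ℂ) * (∫ x in Set.Ioc (0 : ℝ) k,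
        (Complex.exp (z * (x : ℂ)) - 1) * ((x ^ (-1 - α) : ℝ) : ℂ)) =
      ∑' n : ℕ,
        ((α * k ^ (((n : ℝ) + 1) - α) / ((Nat.factorial (n + 1) : ℝ) * (((n : ℝ) + 1) - α)) : ℝ) : ℂ)
          * z ^ (n + 1) := by
  have hppos : ∀ n : ℕ, (0:ℝ) < (n:ℝ) + 1 - α := fun n => by
    have : (0:ℝ) ≤ n := Nat.cast_nonneg n
    linarith
  have hple : ∀ n : ℕ, (1:ℝ) - α ≤ (n:ℝ) + 1 - α := fun n => by
    have : (0:ℝ) ≤ n := Nat.cast_nonneg n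
    linarith
  have hfactpos : ∀ n : ℕ, (0:ℝ) < (Nat.factorial (n+1) : ℝ) := fun n => by
    exact_mod_cast (n+1).factorial_pos
  have hkpow : ∀ n : ℕ, k ^ ((n:ℝ) + 1 - α) = k ^ (-α) * k ^ (n+1) := by
    intro n
    rw [← Real.rpow_natCast k (n+1), ← Real.rpow_add hk]
    congr 1
    push_cast
    ring
  -- Part 1 : integrability
  have hmeas : AEStronglyMeasurable (fun x : ℝ =>
      (Complex.exp (z * (x:ℂ)) - 1) * ((x ^ (-1 - α) : ℝ) : ℂ))
      (volume.restrict (Set.Ioc 0 k)) := by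
    apply ContinuousOn.aestronglyMeasurable _ measurableSet_Ioc
    apply ContinuousOn.mul
    · exact Continuous.continuousOn
        ((Complex.continuous_exp.comp (continuous_const.mul Complex.continuous_ofReal)).sub
          continuous_const)
    · refine Complex.continuous_ofReal.comp_continuousOn ?_
      intro x hx
      exact (Real.continuousAt_rpow_const x _ (Or.inl hx.1.ne')).continuousWithinAt
  have hgint : IntegrableOn (fun x : ℝ => x ^ (-α)) (Set.Ioc 0 k) := by
    rw [← intervalIntegrable_iff_integrableOn_Ioc_of_le hk.le]
    exact intervalIntegral.intervalIntegrable_rpow' (by linarith)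
  have hint : IntegrableOn (fun x : ℝ =>
      (Complex.exp (z * (x:ℂ)) - 1) * ((x ^ (-1 - α) : ℝ) : ℂ)) (Set.Ioc 0 k) := by
    refine Integrable.mono (hgint.const_mul (‖z‖ * Real.exp (‖z‖ * k))) hmeas ?_
    refine (ae_restrict_iff' measurableSet_Ioc).2 (Filter.Eventually.of_forall ?_)
    intro x hx
    have hx0 : 0 < x := hx.1
    have hzx : ‖z * (x:ℂ)‖ = ‖z‖ * x := by
      rw [norm_mul, Complex.norm_real, Real.norm_eq_abs, abs_of_pos hx0]
    have h1 : ‖Complex.exp (z * x) - 1‖ ≤ (‖z‖ * x) * Real.exp (‖z‖ * x) := by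
      have := norm_exp_sub_one_le' (z * (x:ℂ))
      rwa [hzx] at this
    have h2 : Real.exp (‖z‖ * x) ≤ Real.exp (‖z‖ * k) :=
      Real.exp_le_exp.2 (mul_le_mul_of_nonneg_left hx.2 (norm_nonneg z))
    have hxr : x * x ^ (-1 - α) = x ^ (-α) := by
      nth_rewrite 1 [← Real.rpow_one x]
      rw [← Real.rpow_add hx0]
      congr 1
      ring
    calc ‖(Complex.exp (z * x) - 1) * ((x ^ (-1 - α) : ℝ) : ℂ)‖
        = ‖Complex.exp (z * x) - 1‖ * x ^ (-1 - α) := by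
          rw [norm_mul, Complex.norm_real, Real.norm_eq_abs,
            abs_of_pos (Real.rpow_pos_of_pos hx0 _)]
      _ ≤ ((‖z‖ * x) * Real.exp (‖z‖ * k)) * x ^ (-1 - α) := by
          have := mul_le_mul_of_nonneg_left h2 (mul_nonneg (norm_nonneg z) hx0.le)
          exact mul_le_mul_of_nonneg_right (h1.trans this)
            (Real.rpow_pos_of_pos hx0 _).le
      _ = (‖z‖ * Real.exp (‖z‖ * k)) * x ^ (-α) := by
          rw [← hxr]; ring
      _ ≤ ‖(‖z‖ * Real.exp (‖z‖ * k)) * x ^ (-α)‖ := le_abs_self _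
  -- Part 2 : summability of the series
  have hterm : ∀ n : ℕ,
      ‖((α * k ^ (((n : ℝ) + 1) - α) / ((Nat.factorial (n + 1) : ℝ) * (((n : ℝ) + 1) - α)) : ℝ) : ℂ)
        * z ^ (n + 1)‖
      = |α| * (k ^ (-α) * (k * ‖z‖) ^ (n+1)) / ((Nat.factorial (n+1) : ℝ) * ((n:ℝ) + 1 - α)) := by
    intro n
    rw [norm_mul, norm_pow, Complex.norm_real, Real.norm_eq_abs, abs_div, abs_mul, abs_mul,
      abs_of_pos (hfactpos n), abs_of_pos (hppos n),
      abs_of_pos (Real.rpow_pos_of_pos hk _), hkpow n, mul_pow]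
    ring
  have hbase : Summable (fun n : ℕ => (k * ‖z‖) ^ (n+1) / (Nat.factorial (n+1) : ℝ)) :=
    (summable_nat_add_iff 1).2 (Real.summable_pow_div_factorial (k * ‖z‖))
  have hboundgen : ∀ (c : ℝ) (n : ℕ), 0 ≤ c →
      c * (k ^ (-α) * (k * ‖z‖) ^ (n+1)) / ((Nat.factorial (n+1) : ℝ) * ((n:ℝ) + 1 - α))
      ≤ (c * k ^ (-α) / (1 - α)) * ((k * ‖z‖) ^ (n+1) / (Nat.factorial (n+1) : ℝ)) := by
    intro c n hc
    have hnum : 0 ≤ c * (k ^ (-α) * (k * ‖z‖) ^ (n+1)) := by positivity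
    have h1 : (0:ℝ) < (Nat.factorial (n+1) : ℝ) * (1 - α) := by
      have := hfactpos n; nlinarith
    have h2 : (0:ℝ) < (Nat.factorial (n+1) : ℝ) * ((n:ℝ) + 1 - α) :=
      mul_pos (hfactpos n) (hppos n)
    rw [div_mul_div_comm, div_le_div_iff₀ h2 (by nlinarith [hfactpos n] : (0:ℝ) < (1 - α) * (Nat.factorial (n+1) : ℝ))]
    nlinarith [mul_nonneg (mul_nonneg hnum (hfactpos n).le) (sub_nonneg.2 (hple n))]
  have hsummable : Summable (fun n : ℕ =>
      ‖((α * k ^ (((n : ℝ) + 1) - α) / ((Nat.factorial (n + 1) : ℝ) * (((n : ℝ) + 1) - α)) : ℝ) : ℂ)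
        * z ^ (n + 1)‖) := by
    apply Summable.of_nonneg_of_le (fun n => norm_nonneg _) _
      (hbase.mul_left (|α| * k ^ (-α) / (1 - α)))
    intro n
    rw [hterm n]
    exact hboundgen |α| n (abs_nonneg α)
  refine ⟨hint, hsummable, ?_⟩
  -- Part 3 : the identity
  set F : ℕ → ℝ → ℂ := fun n x =>
    (z ^ (n+1) / (Nat.factorial (n+1) : ℂ)) * ((x ^ ((n:ℝ) - α) : ℝ) : ℂ) with hF
  have hrint : ∀ n : ℕ, IntegrableOn (fun x : ℝ => x ^ ((n:ℝ) - α)) (Set.Ioc 0 k) := by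
    intro n
    rw [← intervalIntegrable_iff_integrableOn_Ioc_of_le hk.le]
    refine intervalIntegral.intervalIntegrable_rpow' ?_
    have : (0:ℝ) ≤ n := Nat.cast_nonneg n
    linarith
  have hFint : ∀ n : ℕ, IntegrableOn (F n) (Set.Ioc 0 k) := fun n =>
    ((hrint n).ofReal.const_mul _)
  have hrval : ∀ n : ℕ, ∫ x in Set.Ioc (0:ℝ) k, x ^ ((n:ℝ) - α)
      = k ^ ((n:ℝ) + 1 - α) / ((n:ℝ) + 1 - α) := by
    intro n
    have hq : (-1:ℝ) < (n:ℝ) - α := by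
      have : (0:ℝ) ≤ n := Nat.cast_nonneg n
      linarith
    rw [← intervalIntegral.integral_of_le hk.le, integral_rpow (Or.inl hq),
      Real.zero_rpow (by linarith [hppos n] : (n:ℝ) - α + 1 ≠ 0)]
    have : (n:ℝ) - α + 1 = (n:ℝ) + 1 - α := by ring
    rw [this, sub_zero]
  have hFnorm : ∀ n : ℕ, ∫ x in Set.Ioc (0:ℝ) k, ‖F n x‖
      = (‖z‖ ^ (n+1) / (Nat.factorial (n+1) : ℝ))
        * (k ^ ((n:ℝ) + 1 - α) / ((n:ℝ) + 1 - α)) := by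
    intro n
    rw [← hrval n, ← integral_const_mul]
    apply setIntegral_congr_fun measurableSet_Ioc
    intro x hx
    simp only [hF, norm_mul, norm_div, norm_pow, Complex.norm_real, Real.norm_eq_abs,
      _root_.abs_of_nonneg (Real.rpow_nonneg hx.1.le _), Complex.norm_natCast]
  have hFsum : Summable (fun n : ℕ => ∫ x in Set.Ioc (0:ℝ) k, ‖F n x‖) := by
    apply Summable.of_nonneg_of_le
      (fun n => integral_nonneg (fun x => norm_nonneg _)) _
      (hbase.mul_left (1 * k ^ (-α) / (1 - α)))
    intro n
    rw [hFnorm n]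
    have h1 : (‖z‖ ^ (n+1) / (Nat.factorial (n+1) : ℝ))
        * (k ^ ((n:ℝ) + 1 - α) / ((n:ℝ) + 1 - α))
        = 1 * (k ^ (-α) * (k * ‖z‖) ^ (n+1))
          / ((Nat.factorial (n+1) : ℝ) * ((n:ℝ) + 1 - α)) := by
      rw [hkpow n, mul_pow]
      have hfne : ((Nat.factorial (n+1) : ℝ)) ≠ 0 := (hfactpos n).ne'
      have hpne : ((n:ℝ) + 1 - α) ≠ 0 := (hppos n).ne'
      field_simp
    rw [h1]
    exact hboundgen 1 n zero_le_one
  have hpt : ∀ x ∈ Set.Ioc (0:ℝ) k,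
      HasSum (fun n => F n x) ((Complex.exp (z * (x:ℂ)) - 1) * ((x ^ (-1 - α) : ℝ) : ℂ)) := by
    intro x hx
    have h := (hasSum_exp_shift (z * (x:ℂ))).mul_right (((x ^ (-1 - α) : ℝ) : ℂ))
    have heq : ∀ n : ℕ, (z * (x:ℂ)) ^ (n+1) / (Nat.factorial (n+1) : ℂ)
        * ((x ^ (-1 - α) : ℝ) : ℂ) = F n x := by
      intro n
      have hxx : ((x:ℂ)) ^ (n+1) * ((x ^ (-1 - α) : ℝ) : ℂ) = ((x ^ ((n:ℝ) - α) : ℝ) : ℂ) := by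
        rw [← Complex.ofReal_pow, ← Complex.ofReal_mul]
        congr 1
        rw [← Real.rpow_natCast x (n+1), ← Real.rpow_add hx.1]
        congr 1
        push_cast
        ring
      simp only [hF]
      rw [mul_pow, ← hxx]
      ring
    exact (funext heq) ▸ h
  have hmain := MeasureTheory.hasSum_integral_of_summable_integral_norm
    (μ := volume.restrict (Set.Ioc 0 k)) (F := F) hFint hFsum
  have hintcong : (∫ x in Set.Ioc (0:ℝ) k, ∑' n : ℕ, F n x)
      = ∫ x in Set.Ioc (0:ℝ) k,
        (Complex.exp (z * (x:ℂ)) - 1) * ((x ^ (-1 - α) : ℝ) : ℂ) := by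
    apply setIntegral_congr_fun measurableSet_Ioc
    intro x hx
    exact (hpt x hx).tsum_eq
  have hFval : ∀ n : ℕ, (∫ x in Set.Ioc (0:ℝ) k, F n x)
      = z ^ (n+1) / (Nat.factorial (n+1) : ℂ)
        * (((k ^ ((n:ℝ) + 1 - α) / ((n:ℝ) + 1 - α) : ℝ)) : ℂ) := by
    intro n
    simp only [hF]
    rw [MeasureTheory.integral_const_mul]
    congr 1
    rw [← hrval n]
    exact integral_ofReal (𝕜 := ℂ) (μ := volume.restrict (Set.Ioc 0 k)) (f := fun x : ℝ => x ^ ((n:ℝ) - α))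
  rw [hintcong] at hmain
  rw [← hmain.tsum_eq, ← tsum_mul_left]
  apply tsum_congr
  intro n
  rw [hFval n]
  have hf : ((Nat.factorial (n+1) : ℝ) : ℂ) ≠ 0 := by exact_mod_cast (hfactpos n).ne'
  have hp : (((n:ℝ) + 1 - α : ℝ) : ℂ) ≠ 0 := Complex.ofReal_ne_zero.2 (hppos n).ne'
  push_cast at hf hp ⊢
  field_simp
end

section
/- Let k > 0 and let g : ℝ → ℂ be continuous on [0, k]. Then ∫_0^k g(x) e^{zx} dx = o(e^{kz}) as z → ∞ in the closed right half-plane; precisely, for every ε > 0 there exists R > 0 such that |∫_0^k g(x) e^{zx} dx| ≤ ε e^{k Re z} for every z ∈ ℂ with Re z ≥ 0 and |z| > R. -/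
open Complex intervalIntegral

/-- Let `k > 0` and let `g : ℝ → ℂ` be continuous on `[0, k]`. Then
`∫_0^k g(x) e^{zx} dx = o(e^{kz})` as `z → ∞` in the closed right half-plane: for every
`ε > 0` there exists `R > 0` such that `‖∫_0^k g(x) e^{zx} dx‖ ≤ ε e^{k Re z}` for every
`z` with `Re z ≥ 0` and `|z| > R`. -/
theorem stmt_14 (k : ℝ) (hk : 0 < k) (g : ℝ → ℂ) (hg : ContinuousOn g (Set.Icc 0 k)) :
    ∀ ε : ℝ, 0 < ε → ∃ R : ℝ, 0 < R ∧ ∀ z : ℂ, 0 ≤ z.re → R < ‖z‖ →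
      ‖∫ x in (0 : ℝ)..k, g x * Complex.exp (z * (x : ℂ))‖ ≤ ε * Real.exp (k * z.re) := by
  intro ε hε
  -- approximate real and imaginary parts of g by polynomials
  obtain ⟨p, hp⟩ := exists_polynomial_near_of_continuousOn 0 k (fun x => (g x).re)
      (Complex.continuous_re.comp_continuousOn hg) (ε / (4 * k)) (by positivity)
  obtain ⟨q, hq⟩ := exists_polynomial_near_of_continuousOn 0 k (fun x => (g x).im)
      (Complex.continuous_im.comp_continuousOn hg) (ε / (4 * k)) (by positivity)
  set h : ℝ → ℂ := fun x => ((p.eval x : ℝ) : ℂ) + ((q.eval x : ℝ) : ℂ) * Complex.I with hh_def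
  set h' : ℝ → ℂ := fun x => ((p.derivative.eval x : ℝ) : ℂ) + ((q.derivative.eval x : ℝ) : ℂ) * Complex.I
    with hh'_def
  have hder : ∀ x : ℝ, HasDerivAt h (h' x) x := by
    intro x
    exact ((p.hasDerivAt x).ofReal_comp).add (((q.hasDerivAt x).ofReal_comp).mul_const Complex.I)
  have hcont : Continuous h :=
    (Complex.continuous_ofReal.comp p.continuous).add
      ((Complex.continuous_ofReal.comp q.continuous).mul continuous_const)
  have hcont' : Continuous h' :=
    (Complex.continuous_ofReal.comp p.derivative.continuous).add
      ((Complex.continuous_ofReal.comp q.derivative.continuous).mul continuous_const)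
  -- bound on ‖g - h‖ on [0,k]
  have hgh : ∀ x ∈ Set.Icc (0:ℝ) k, ‖g x - h x‖ ≤ ε / (2 * k) := by
    intro x hx
    have h1 := le_of_lt (hp x hx)
    have h2 := le_of_lt (hq x hx)
    have hre : (g x - h x).re = (g x).re - p.eval x := by simp [hh_def]
    have him : (g x - h x).im = (g x).im - q.eval x := by simp [hh_def]
    calc ‖g x - h x‖ ≤ |(g x - h x).re| + |(g x - h x).im| :=
          Complex.norm_le_abs_re_add_abs_im _
      _ ≤ ε / (4 * k) + ε / (4 * k) := by
          rw [hre, him]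
          gcongr <;> [skip; skip]
          · rw [abs_sub_comm]; exact h1
          · rw [abs_sub_comm]; exact h2
      _ = ε / (2 * k) := by ring
  -- bound for h'
  obtain ⟨M, hM⟩ := (isCompact_Icc (a := (0:ℝ)) (b := k)).exists_bound_of_continuousOn
    hcont'.continuousOn
  set M' : ℝ := max M 0 with hM'_def
  have hM'0 : 0 ≤ M' := le_max_right _ _
  have hM' : ∀ x ∈ Set.Icc (0:ℝ) k, ‖h' x‖ ≤ M' := fun x hx =>
    (hM x hx).trans (le_max_left _ _)
  set C : ℝ := ‖h k‖ + ‖h 0‖ + M' * k + 1 with hC_def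
  have hC0 : 0 < C := by positivity
  refine ⟨1 + 2 * C / ε, by positivity, ?_⟩
  intro z hz hzR
  have hznorm : 0 < ‖z‖ := lt_trans (by positivity) hzR
  have hz0 : z ≠ 0 := by simpa using (norm_pos_iff).mp hznorm
  have cont_exp : Continuous fun x : ℝ => Complex.exp (z * x) :=
    Complex.continuous_exp.comp (continuous_const.mul Complex.continuous_ofReal)
  set E : ℝ := Real.exp (k * z.re) with hE_def
  have hE1 : 1 ≤ E := Real.one_le_exp (by positivity)
  have hE0 : 0 < E := lt_of_lt_of_le one_pos hE1
  -- norm of exp(z*x)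
  have hexp_norm : ∀ x : ℝ, x ∈ Set.Icc (0:ℝ) k → ‖Complex.exp (z * x)‖ ≤ E := by
    intro x hx
    rw [Complex.norm_exp]
    apply Real.exp_le_exp.mpr
    have : (z * (x:ℂ)).re = z.re * x := by simp
    rw [this]
    calc z.re * x ≤ z.re * k := by
          exact mul_le_mul_of_nonneg_left hx.2 hz
      _ = k * z.re := mul_comm _ _
  -- integrability
  have hint_g : IntervalIntegrable (fun x : ℝ => g x * Complex.exp (z * x)) MeasureTheory.volume 0 k := by
    apply ContinuousOn.intervalIntegrable
    rw [Set.uIcc_of_le hk.le]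
    exact hg.mul cont_exp.continuousOn
  have hint_h : IntervalIntegrable (fun x : ℝ => h x * Complex.exp (z * x)) MeasureTheory.volume 0 k :=
    (Continuous.intervalIntegrable (hcont.mul cont_exp) 0 k)
  -- term 1: ∫ (g - h) e
  have hterm1 : ‖∫ x in (0:ℝ)..k, (g x - h x) * Complex.exp (z * x)‖ ≤ ε / 2 * E := by
    have := intervalIntegral.norm_integral_le_of_norm_le_const
      (C := ε / (2 * k) * E) (f := fun x => (g x - h x) * Complex.exp (z * x))
      (a := 0) (b := k) ?_
    · calc ‖∫ x in (0:ℝ)..k, (g x - h x) * Complex.exp (z * x)‖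
          ≤ ε / (2 * k) * E * |k - 0| := this
        _ = ε / 2 * E := by
            rw [sub_zero, abs_of_pos hk]; field_simp
    · intro x hx
      rw [Set.uIoc_of_le hk.le] at hx
      have hx' : x ∈ Set.Icc (0:ℝ) k := ⟨hx.1.le, hx.2⟩
      rw [norm_mul]
      exact mul_le_mul (hgh x hx') (hexp_norm x hx') (norm_nonneg _) (by positivity)
  -- term 2: integration by parts for ∫ h e
  have hIBP : (∫ x in (0:ℝ)..k, h x * Complex.exp (z * x)) * z
      = h k * Complex.exp (z * k) - h 0 - ∫ x in (0:ℝ)..k, h' x * Complex.exp (z * x) := by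
    have hderiv : ∀ x ∈ Set.uIcc (0:ℝ) k, HasDerivAt (fun t : ℝ => h t * Complex.exp (z * t))
        (h' x * Complex.exp (z * x) + h x * Complex.exp (z * x) * z) x := by
      intro x _
      have he : HasDerivAt (fun t : ℝ => Complex.exp (z * t)) (Complex.exp (z * x) * z) x := by
        have h1 : HasDerivAt (fun t : ℝ => z * (t : ℂ)) z x := by
          simpa using (Complex.ofRealCLM.hasDerivAt (x := x)).const_mul z
        simpa using h1.cexp
      have := ((hder x).mul he : HasDerivAt (fun t : ℝ => h t * Complex.exp (z * t)) _ x)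
      exact this.congr_deriv (by ring)
    have hintd : IntervalIntegrable
        (fun x : ℝ => h' x * Complex.exp (z * x) + h x * Complex.exp (z * x) * z)
        MeasureTheory.volume 0 k :=
      Continuous.intervalIntegrable ((hcont'.mul cont_exp).add ((hcont.mul cont_exp).mul
        continuous_const)) 0 k
    have key := intervalIntegral.integral_eq_sub_of_hasDerivAt hderiv hintd
    have hsplit : (∫ x in (0:ℝ)..k, (h' x * Complex.exp (z * x) + h x * Complex.exp (z * x) * z))
        = (∫ x in (0:ℝ)..k, h' x * Complex.exp (z * x))
          + (∫ x in (0:ℝ)..k, h x * Complex.exp (z * x)) * z := by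
      rw [intervalIntegral.integral_add (f := fun x => h' x * Complex.exp (z * x))
        (g := fun x => h x * Complex.exp (z * x) * z)
        (Continuous.intervalIntegrable (hcont'.mul cont_exp) 0 k)
        (Continuous.intervalIntegrable ((hcont.mul cont_exp).mul continuous_const) 0 k),
        intervalIntegral.integral_mul_const]
    rw [hsplit] at key
    have : (Complex.exp (z * (0:ℝ))) = 1 := by simp
    rw [this, mul_one] at key
    linear_combination key
  have hint_h' : ‖∫ x in (0:ℝ)..k, h' x * Complex.exp (z * x)‖ ≤ M' * E * k := by
    have := intervalIntegral.norm_integral_le_of_norm_le_const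
      (C := M' * E) (f := fun x => h' x * Complex.exp (z * x)) (a := 0) (b := k) ?_
    · calc ‖∫ x in (0:ℝ)..k, h' x * Complex.exp (z * x)‖ ≤ M' * E * |k - 0| := this
        _ = M' * E * k := by rw [sub_zero, abs_of_pos hk]
    · intro x hx
      rw [Set.uIoc_of_le hk.le] at hx
      have hx' : x ∈ Set.Icc (0:ℝ) k := ⟨hx.1.le, hx.2⟩
      rw [norm_mul]
      exact mul_le_mul (hM' x hx') (hexp_norm x hx') (norm_nonneg _) hM'0
  have hterm2 : ‖∫ x in (0:ℝ)..k, h x * Complex.exp (z * x)‖ ≤ ε / 2 * E := by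
    have hnormIBP : ‖∫ x in (0:ℝ)..k, h x * Complex.exp (z * x)‖ * ‖z‖ ≤ C * E := by
      rw [← norm_mul, hIBP]
      calc ‖h k * Complex.exp (z * k) - h 0 - ∫ x in (0:ℝ)..k, h' x * Complex.exp (z * x)‖
          ≤ ‖h k * Complex.exp (z * k) - h 0‖ + ‖∫ x in (0:ℝ)..k, h' x * Complex.exp (z * x)‖ :=
            norm_sub_le _ _
        _ ≤ (‖h k‖ * E + ‖h 0‖) + M' * E * k := by
            gcongr
            calc ‖h k * Complex.exp (z * k) - h 0‖ ≤ ‖h k * Complex.exp (z * k)‖ + ‖h 0‖ :=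
                  norm_sub_le _ _
              _ ≤ ‖h k‖ * E + ‖h 0‖ := by
                  gcongr
                  rw [norm_mul]
                  exact mul_le_mul_of_nonneg_left
                    (hexp_norm k ⟨hk.le, le_refl k⟩) (norm_nonneg _)
        _ ≤ C * E := by
            rw [hC_def]
            nlinarith [norm_nonneg (h 0), norm_nonneg (h k), hE1, hM'0, hk.le,
              mul_nonneg (mul_nonneg hM'0 hE0.le) hk.le]
    -- from ‖z‖ > 2C/ε deduce the bound
    have hzC : 2 * C / ε < ‖z‖ := lt_of_le_of_lt (by linarith) hzR
    have h1 : ‖∫ x in (0:ℝ)..k, h x * Complex.exp (z * x)‖ ≤ C * E / ‖z‖ := by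
      rw [le_div_iff₀ hznorm]
      exact hnormIBP
    calc ‖∫ x in (0:ℝ)..k, h x * Complex.exp (z * x)‖ ≤ C * E / ‖z‖ := h1
      _ ≤ ε / 2 * E := by
          rw [div_le_iff₀ hznorm]
          have : 2 * C / ε ≤ ‖z‖ := hzC.le
          rw [div_le_iff₀ hε] at this
          nlinarith
  -- combine
  have hsplit : (∫ x in (0:ℝ)..k, g x * Complex.exp (z * x))
      = (∫ x in (0:ℝ)..k, (g x - h x) * Complex.exp (z * x))
        + (∫ x in (0:ℝ)..k, h x * Complex.exp (z * x)) := by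
    have hs : (∫ x in (0:ℝ)..k, (g x - h x) * Complex.exp (z * x))
        = (∫ x in (0:ℝ)..k, g x * Complex.exp (z * x))
          - (∫ x in (0:ℝ)..k, h x * Complex.exp (z * x)) := by
      rw [← intervalIntegral.integral_sub hint_g hint_h]
      congr 1
      ext x
      ring
    rw [hs]
    ring
  rw [hsplit]
  calc ‖(∫ x in (0:ℝ)..k, (g x - h x) * Complex.exp (z * x))
        + (∫ x in (0:ℝ)..k, h x * Complex.exp (z * x))‖
      ≤ ‖∫ x in (0:ℝ)..k, (g x - h x) * Complex.exp (z * x)‖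
        + ‖∫ x in (0:ℝ)..k, h x * Complex.exp (z * x)‖ := norm_add_le _ _
    _ ≤ ε / 2 * E + ε / 2 * E := add_le_add hterm1 hterm2
    _ = ε * E := by ring
end

section
/- Let k > 0, let n ≥ 1 be an integer, and let p : ℝ → ℝ be n times continuously differentiable on an open interval containing [0, k], with p^{(m)}(k) = 0 for every integer m with 0 ≤ m ≤ n − 2. Set C = Σ_{m=0}^{n−1} |p^{(m)}(0)|. Then for every ε > 0 there exists R > 1 such that for every z ∈ ℂ with Re z ≥ 0 and |z| > R, |∫_0^k e^{zx} p(x) dx − (−1)^{n−1} p^{(n−1)}(k) e^{kz} z^{−n}| ≤ ε e^{k Re z} |z|^{−n} + C |z|^{−1}. -/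
open Complex intervalIntegral


lemma my_norm_exp_mul (z : ℂ) (x : ℝ) : ‖Complex.exp (z * (x:ℂ))‖ = Real.exp (z.re * x) := by
  rw [Complex.norm_exp]
  norm_num

lemma my_ibp_step (k : ℝ) (z : ℂ) (hz : z ≠ 0) (f f' : ℝ → ℝ)
    (hf : ∀ x ∈ Set.uIcc (0:ℝ) k, HasDerivAt f (f' x) x)
    (hf' : ContinuousOn f' (Set.uIcc (0:ℝ) k)) :
    (∫ x in (0:ℝ)..k, Complex.exp (z * (x:ℂ)) * (f x : ℂ))
      = ((f k : ℂ) * Complex.exp ((k:ℂ) * z) - (f 0 : ℂ)) * z⁻¹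
        - z⁻¹ * ∫ x in (0:ℝ)..k, Complex.exp (z * (x:ℂ)) * (f' x : ℂ) := by
  have hv : ∀ x : ℝ, HasDerivAt (fun y : ℝ => Complex.exp (z * (y:ℂ)) / z)
      (Complex.exp (z * (x:ℂ))) x := by
    intro x
    have h1 : HasDerivAt (fun y : ℝ => z * (y:ℂ)) z x := by
      simpa using ((hasDerivAt_id x).ofReal_comp.const_mul z)
    have h2 := (h1.cexp).div_const z
    simpa [mul_div_assoc, mul_div_cancel_right₀ _ hz] using h2
  have hu : ∀ x ∈ Set.uIcc (0:ℝ) k, HasDerivAt (fun y : ℝ => ((f y : ℝ) : ℂ)) ((f' x : ℂ)) x :=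
    fun x hx => (hf x hx).ofReal_comp
  have hu' : IntervalIntegrable (fun x : ℝ => ((f' x : ℝ) : ℂ)) MeasureTheory.volume 0 k :=
    (Complex.continuous_ofReal.comp_continuousOn hf').intervalIntegrable
  have hv' : IntervalIntegrable (fun x : ℝ => Complex.exp (z * (x:ℂ))) MeasureTheory.volume 0 k :=
    ((Complex.continuous_exp.comp (continuous_const.mul Complex.continuous_ofReal)).intervalIntegrable 0 k)
  have key := intervalIntegral.integral_mul_deriv_eq_deriv_mul hu (fun x _ => hv x) hu' hv'
  have e1 : (∫ x in (0:ℝ)..k, Complex.exp (z * (x:ℂ)) * (f x : ℂ))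
      = ∫ x in (0:ℝ)..k, ((f x : ℝ):ℂ) * Complex.exp (z * (x:ℂ)) := by
    simp [mul_comm]
  rw [e1, key]
  have e2 : (∫ x in (0:ℝ)..k, ((f' x : ℝ):ℂ) * (Complex.exp (z * (x:ℂ)) / z))
      = z⁻¹ * ∫ x in (0:ℝ)..k, Complex.exp (z * (x:ℂ)) * (f' x : ℂ) := by
    rw [← intervalIntegral.integral_const_mul]
    apply intervalIntegral.integral_congr
    intro x _
    field_simp
  rw [e2]
  rw [mul_comm (k:ℂ) z]
  field_simp
  simp

lemma my_key_bound (k : ℝ) (hk : 0 < k) (q : ℝ → ℝ) (hq : ContinuousOn q (Set.Icc 0 k))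
    (ε : ℝ) (hε : 0 < ε) :
    ∃ R : ℝ, 1 < R ∧ ∀ z : ℂ, 0 ≤ z.re → R < ‖z‖ →
      ‖∫ x in (0:ℝ)..k, Complex.exp (z * (x:ℂ)) * (q x : ℂ)‖ ≤ ε * Real.exp (k * z.re) := by
  obtain ⟨g, hg⟩ := exists_polynomial_near_of_continuousOn 0 k q hq (ε / (2 * k))
    (by positivity)
  obtain ⟨M, hM⟩ := (isCompact_Icc (a := (0:ℝ)) (b := k)).exists_bound_of_continuousOn
    (g.derivative.continuous.continuousOn (s := Set.Icc 0 k))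
  have hM0 : 0 ≤ M := le_trans (norm_nonneg _) (hM 0 (by constructor <;> linarith))
  set B : ℝ := |g.eval k| + |g.eval 0| + k * M with hB
  have hB0 : 0 ≤ B := by positivity
  refine ⟨2 + 2 * B / ε, by
    have h : (0:ℝ) ≤ 2 * B / ε := by positivity
    linarith, ?_⟩
  intro z hre hzR
  have hz1 : 1 < ‖z‖ := by
    have : 0 ≤ 2 * B / ε := by positivity
    linarith
  have hz0 : z ≠ 0 := by
    intro h; rw [h] at hz1; simp at hz1; linarith
  set E : ℝ := Real.exp (k * z.re) with hE
  have hE1 : (1:ℝ) ≤ E := Real.one_le_exp (by positivity)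
  have hEx : ∀ x ∈ Set.Icc (0:ℝ) k, Real.exp (z.re * x) ≤ E := by
    intro x hx
    exact Real.exp_le_exp.2 (by nlinarith [hx.1, hx.2])
  have huIcc : Set.uIcc (0:ℝ) k = Set.Icc 0 k := Set.uIcc_of_le hk.le
  -- split the integral
  have h1 : IntervalIntegrable (fun x : ℝ => Complex.exp (z * (x:ℂ)) * ((q x - g.eval x : ℝ):ℂ))
      MeasureTheory.volume 0 k := by
    apply ContinuousOn.intervalIntegrable
    rw [huIcc]
    exact ((Complex.continuous_exp.comp
      (continuous_const.mul Complex.continuous_ofReal)).continuousOn).mul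
      (Complex.continuous_ofReal.comp_continuousOn (hq.sub g.continuous.continuousOn))
  have h2 : IntervalIntegrable (fun x : ℝ => Complex.exp (z * (x:ℂ)) * ((g.eval x : ℝ):ℂ))
      MeasureTheory.volume 0 k := by
    apply Continuous.intervalIntegrable
    exact (Complex.continuous_exp.comp
      (continuous_const.mul Complex.continuous_ofReal)).mul
      (Complex.continuous_ofReal.comp g.continuous)
  have split : (∫ x in (0:ℝ)..k, Complex.exp (z * (x:ℂ)) * (q x : ℂ))
      = (∫ x in (0:ℝ)..k, Complex.exp (z * (x:ℂ)) * ((q x - g.eval x : ℝ):ℂ))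
        + ∫ x in (0:ℝ)..k, Complex.exp (z * (x:ℂ)) * ((g.eval x : ℝ):ℂ) := by
    rw [← intervalIntegral.integral_add h1 h2]
    apply intervalIntegral.integral_congr
    intro x _
    push_cast
    ring
  rw [split]
  have bound1 : ‖∫ x in (0:ℝ)..k, Complex.exp (z * (x:ℂ)) * ((q x - g.eval x : ℝ):ℂ)‖
      ≤ E * (ε / (2 * k)) * |k - 0| := by
    apply intervalIntegral.norm_integral_le_of_norm_le_const
    intro x hx
    rw [Set.uIoc_of_le hk.le] at hx
    have hx' : x ∈ Set.Icc (0:ℝ) k := ⟨hx.1.le, hx.2⟩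
    rw [norm_mul, my_norm_exp_mul, Complex.norm_real, Real.norm_eq_abs]
    have := hg x hx'
    have h3 : |q x - g.eval x| ≤ ε / (2 * k) := by rw [abs_sub_comm]; linarith [abs_nonneg (g.eval x - q x)]
    exact mul_le_mul (hEx x hx') h3 (abs_nonneg _) (by positivity)
  have bound1' : ‖∫ x in (0:ℝ)..k, Complex.exp (z * (x:ℂ)) * ((q x - g.eval x : ℝ):ℂ)‖
      ≤ ε / 2 * E := by
    refine le_trans bound1 (le_of_eq ?_)
    rw [_root_.abs_of_nonneg (by linarith : (0:ℝ) ≤ k - 0)]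
    field_simp
    ring
  -- second piece via integration by parts
  have ibp := my_ibp_step k z hz0 (fun x => g.eval x) (fun x => g.derivative.eval x)
    (fun x _ => g.hasDerivAt x) (g.derivative.continuous.continuousOn)
  have bound2 : ‖∫ x in (0:ℝ)..k, Complex.exp (z * (x:ℂ)) * ((g.eval x : ℝ):ℂ)‖
      ≤ ε / 2 * E := by
    rw [ibp]
    have hnormz : ‖z⁻¹‖ = ‖z‖⁻¹ := norm_inv z
    have hint : ‖∫ x in (0:ℝ)..k, Complex.exp (z * (x:ℂ)) * ((g.derivative.eval x : ℝ):ℂ)‖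
        ≤ E * M * |k - 0| := by
      apply intervalIntegral.norm_integral_le_of_norm_le_const
      intro x hx
      rw [Set.uIoc_of_le hk.le] at hx
      have hx' : x ∈ Set.Icc (0:ℝ) k := ⟨hx.1.le, hx.2⟩
      rw [norm_mul, my_norm_exp_mul, Complex.norm_real]
      exact mul_le_mul (hEx x hx') (hM x hx') (norm_nonneg _) (by positivity)
    have hbdy : ‖((g.eval k : ℝ):ℂ) * Complex.exp ((k:ℂ) * z) - ((g.eval 0 : ℝ):ℂ)‖
        ≤ |g.eval k| * E + |g.eval 0| := by
      refine le_trans (norm_sub_le _ _) ?_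
      rw [norm_mul, Complex.norm_real, Complex.norm_real, Real.norm_eq_abs, Real.norm_eq_abs]
      have : ‖Complex.exp ((k:ℂ) * z)‖ = E := by
        rw [Complex.norm_exp, hE]
        norm_num
      rw [this]
    have hBz : B * ‖z‖⁻¹ ≤ ε / 2 := by
      have hzpos : (0:ℝ) < ‖z‖ := by linarith
      rw [mul_inv_le_iff₀ hzpos]
      have : 2 * B / ε < ‖z‖ := by linarith
      rw [div_lt_iff₀ hε] at this
      nlinarith
    calc ‖(((g.eval k : ℝ):ℂ) * Complex.exp ((k:ℂ) * z) - ((g.eval 0 : ℝ):ℂ)) * z⁻¹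
          - z⁻¹ * ∫ x in (0:ℝ)..k, Complex.exp (z * (x:ℂ)) * ((g.derivative.eval x : ℝ):ℂ)‖
        ≤ (|g.eval k| * E + |g.eval 0|) * ‖z‖⁻¹ + ‖z‖⁻¹ * (E * M * |k - 0|) := by
          refine le_trans (norm_sub_le _ _) ?_
          rw [norm_mul, norm_mul, hnormz]
          gcongr
      _ ≤ (B * E) * ‖z‖⁻¹ := by
          rw [_root_.abs_of_nonneg (by linarith : (0:ℝ) ≤ k - 0), hB]
          have hzinv : (0:ℝ) ≤ ‖z‖⁻¹ := by positivity
          have key : |Polynomial.eval 0 g| * ‖z‖⁻¹ ≤ |Polynomial.eval 0 g| * E * ‖z‖⁻¹ := by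
            nlinarith [mul_nonneg (mul_nonneg (abs_nonneg (Polynomial.eval 0 g)) hzinv) (by linarith : (0:ℝ) ≤ E - 1)]
          nlinarith [key, mul_nonneg (by linarith : (0:ℝ) ≤ E) hM0, hk.le]
      _ ≤ ε / 2 * E := by
          have := hBz
          nlinarith
  calc ‖(∫ x in (0:ℝ)..k, Complex.exp (z * (x:ℂ)) * ((q x - g.eval x : ℝ):ℂ))
        + ∫ x in (0:ℝ)..k, Complex.exp (z * (x:ℂ)) * ((g.eval x : ℝ):ℂ)‖
      ≤ ε / 2 * E + ε / 2 * E := le_trans (norm_add_le _ _) (add_le_add bound1' bound2)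
    _ = ε * E := by ring

lemma my_expansion (k c d : ℝ) (hk : 0 < k) (hc : c < 0) (hd : k < d) (n : ℕ) (p : ℝ → ℝ)
    (hp : ContDiffOn ℝ n p (Set.Ioo c d)) (z : ℂ) (hz : z ≠ 0) :
    ∀ j, j ≤ n →
    (∫ x in (0:ℝ)..k, Complex.exp (z * (x:ℂ)) * (p x : ℂ))
      = (∑ m ∈ Finset.range j, (-1:ℂ)^m * z ^ (-(m:ℤ) - 1) *
          (Complex.exp ((k:ℂ) * z) * ((iteratedDeriv m p k : ℝ):ℂ) - ((iteratedDeriv m p 0 : ℝ):ℂ)))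
        + (-1:ℂ)^j * z ^ (-(j:ℤ)) *
            ∫ x in (0:ℝ)..k, Complex.exp (z * (x:ℂ)) * ((iteratedDeriv j p x : ℝ):ℂ) := by
  have hopen : IsOpen (Set.Ioo c d) := isOpen_Ioo
  have hsub : Set.uIcc (0:ℝ) k ⊆ Set.Ioo c d := by
    rw [Set.uIcc_of_le hk.le]
    intro x hx
    exact ⟨lt_of_lt_of_le hc hx.1, lt_of_le_of_lt hx.2 hd⟩
  have heq : ∀ m : ℕ, ∀ x ∈ Set.Ioo c d,
      iteratedDerivWithin m p (Set.Ioo c d) x = iteratedDeriv m p x := by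
    intro m x hx
    rw [iteratedDerivWithin_eq_iteratedFDerivWithin, iteratedDeriv_eq_iteratedFDeriv,
      iteratedFDerivWithin_of_isOpen m hopen hx]
  have hcont : ∀ m : ℕ, m ≤ n → ContinuousOn (iteratedDeriv m p) (Set.Ioo c d) := by
    intro m hm
    exact (hp.continuousOn_iteratedDerivWithin (by exact_mod_cast hm) hopen.uniqueDiffOn).congr
      (fun x hx => (heq m x hx).symm)
  have hderiv : ∀ m : ℕ, m < n → ∀ x ∈ Set.Ioo c d,
      HasDerivAt (iteratedDeriv m p) (iteratedDeriv (m+1) p x) x := by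
    intro m hm x hx
    have h1 := hp.differentiableOn_iteratedDerivWithin (m := m) (by exact_mod_cast hm)
      hopen.uniqueDiffOn
    have h2 : DifferentiableWithinAt ℝ (iteratedDeriv m p) (Set.Ioo c d) x :=
      (h1 x hx).congr (fun y hy => (heq m y hy).symm) (heq m x hx).symm
    have hdiff : DifferentiableAt ℝ (iteratedDeriv m p) x := h2.differentiableAt (hopen.mem_nhds hx)
    rw [iteratedDeriv_succ]
    exact hdiff.hasDerivAt
  intro j
  induction j with
  | zero => intro _; simp [iteratedDeriv_zero]
  | succ j ih =>
    intro hj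
    have hjn : j < n := Nat.lt_of_succ_le hj
    rw [ih hjn.le]
    have step := my_ibp_step k z hz (iteratedDeriv j p) (iteratedDeriv (j+1) p)
      (fun x hx => hderiv j hjn x (hsub hx))
      ((hcont (j+1) hj).mono hsub)
    rw [step, Finset.sum_range_succ]
    have hc1 : z ^ (-((j+1:ℕ):ℤ)) = z ^ (-(j:ℤ) - 1) := by rw [show -((j+1:ℕ):ℤ) = -(j:ℤ) - 1 by push_cast; ring]
    have hc2 : z ^ (-(j:ℤ) - 1) = z ^ (-(j:ℤ)) * z⁻¹ := by
      rw [show -(j:ℤ) - 1 = -(j:ℤ) + (-1) by ring, zpow_add₀ hz, zpow_neg_one]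
    rw [hc1, hc2]
    ring

/-- Let `k > 0`, let `n ≥ 1`, and let `p : ℝ → ℝ` be `n` times continuously
differentiable on an open interval containing `[0, k]`, with `p^{(m)}(k) = 0` for every
`0 ≤ m ≤ n - 2`. With `C = Σ_{m=0}^{n-1} |p^{(m)}(0)|`, for every `ε > 0` there exists
`R > 1` such that for every `z` with `Re z ≥ 0` and `|z| > R`,
`‖∫_0^k e^{zx} p(x) dx - (-1)^{n-1} p^{(n-1)}(k) e^{kz} z^{-n}‖ ≤ ε e^{k Re z} |z|^{-n} + C |z|⁻¹`. -/
theorem stmt_15 (k : ℝ) (hk : 0 < k) (n : ℕ) (hn : 1 ≤ n) (p : ℝ → ℝ)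
    (c d : ℝ) (hc : c < 0) (hd : k < d)
    (hp : ContDiffOn ℝ n p (Set.Ioo c d))
    (hpk : ∀ m : ℕ, m ≤ n - 2 → iteratedDeriv m p k = 0) :
    ∀ ε : ℝ, 0 < ε → ∃ R : ℝ, 1 < R ∧ ∀ z : ℂ, 0 ≤ z.re → R < ‖z‖ →
      ‖(∫ x in (0 : ℝ)..k, Complex.exp (z * (x : ℂ)) * (p x : ℂ)) -
        (-1) ^ (n - 1) * ((iteratedDeriv (n - 1) p k : ℝ) : ℂ) * Complex.exp (k * z) * z ^ (-(n : ℤ))‖ ≤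
      ε * Real.exp (k * z.re) * ‖z‖ ^ (-(n : ℤ)) +
        (∑ m ∈ Finset.range n, |iteratedDeriv m p 0|) * ‖z‖⁻¹ := by
  intro ε hε
  have hopen : IsOpen (Set.Ioo c d) := isOpen_Ioo
  have hIcc : Set.Icc (0:ℝ) k ⊆ Set.Ioo c d := by
    intro x hx
    exact ⟨lt_of_lt_of_le hc hx.1, lt_of_le_of_lt hx.2 hd⟩
  have heq : ∀ m : ℕ, ∀ x ∈ Set.Ioo c d,
      iteratedDerivWithin m p (Set.Ioo c d) x = iteratedDeriv m p x := by
    intro m x hx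
    rw [iteratedDerivWithin_eq_iteratedFDerivWithin, iteratedDeriv_eq_iteratedFDeriv,
      iteratedFDerivWithin_of_isOpen m hopen hx]
  have hqcont : ContinuousOn (iteratedDeriv n p) (Set.Icc 0 k) :=
    ((hp.continuousOn_iteratedDerivWithin le_rfl hopen.uniqueDiffOn).congr
      (fun x hx => (heq n x hx).symm)).mono hIcc
  obtain ⟨R, hR1, hR⟩ := my_key_bound k hk (iteratedDeriv n p) hqcont ε hε
  refine ⟨R, hR1, ?_⟩
  intro z hre hzR
  have hz1 : 1 < ‖z‖ := lt_trans hR1 hzR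
  have hz0 : z ≠ 0 := by
    intro h; rw [h, norm_zero] at hz1; linarith
  rw [my_expansion k c d hk hc hd n p hp z hz0 n le_rfl]
  set I : ℂ := ∫ x in (0:ℝ)..k, Complex.exp (z * (x:ℂ)) * ((iteratedDeriv n p x : ℝ):ℂ) with hI
  have hsplit : (∑ m ∈ Finset.range n, (-1:ℂ)^m * z ^ (-(m:ℤ) - 1) *
          (Complex.exp ((k:ℂ) * z) * ((iteratedDeriv m p k : ℝ):ℂ) - ((iteratedDeriv m p 0 : ℝ):ℂ)))
      = (-1:ℂ)^(n-1) * ((iteratedDeriv (n-1) p k : ℝ):ℂ) * Complex.exp ((k:ℂ) * z) * z ^ (-(n:ℤ))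
        - ∑ m ∈ Finset.range n, (-1:ℂ)^m * z ^ (-(m:ℤ) - 1) * ((iteratedDeriv m p 0 : ℝ):ℂ) := by
    have e1 : (∑ m ∈ Finset.range n, (-1:ℂ)^m * z ^ (-(m:ℤ) - 1) *
          (Complex.exp ((k:ℂ) * z) * ((iteratedDeriv m p k : ℝ):ℂ) - ((iteratedDeriv m p 0 : ℝ):ℂ)))
        = (∑ m ∈ Finset.range n, (-1:ℂ)^m * z ^ (-(m:ℤ) - 1) *
            (Complex.exp ((k:ℂ) * z) * ((iteratedDeriv m p k : ℝ):ℂ)))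
          - ∑ m ∈ Finset.range n, (-1:ℂ)^m * z ^ (-(m:ℤ) - 1) * ((iteratedDeriv m p 0 : ℝ):ℂ) := by
      rw [← Finset.sum_sub_distrib]
      exact Finset.sum_congr rfl (fun m _ => by ring)
    rw [e1]
    congr 1
    rw [Finset.sum_eq_single_of_mem (n-1) (Finset.mem_range.2 (by omega))]
    · have hcast : (-(((n-1:ℕ)):ℤ) - 1) = -(n:ℤ) := by omega
      rw [hcast]
      ring
    · intro m hm hne
      have h0 : iteratedDeriv m p k = 0 := hpk m (by
        have := Finset.mem_range.1 hm
        omega)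
      simp [h0]
  rw [hsplit]
  have hrw : (-1:ℂ)^(n-1) * ((iteratedDeriv (n-1) p k : ℝ):ℂ) * Complex.exp ((k:ℂ) * z) * z ^ (-(n:ℤ))
        - (∑ m ∈ Finset.range n, (-1:ℂ)^m * z ^ (-(m:ℤ) - 1) * ((iteratedDeriv m p 0 : ℝ):ℂ))
        + (-1:ℂ)^n * z ^ (-(n:ℤ)) * I
        - (-1:ℂ)^(n-1) * ((iteratedDeriv (n-1) p k : ℝ):ℂ) * Complex.exp ((k:ℂ) * z) * z ^ (-(n:ℤ))
      = (-1:ℂ)^n * z ^ (-(n:ℤ)) * I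
        - (∑ m ∈ Finset.range n, (-1:ℂ)^m * z ^ (-(m:ℤ) - 1) * ((iteratedDeriv m p 0 : ℝ):ℂ)) := by
    ring
  rw [hrw]
  have hzpos : (0:ℝ) < ‖z‖ := by linarith
  have hX : ‖(-1:ℂ)^n * z ^ (-(n:ℤ)) * I‖ ≤ ε * Real.exp (k * z.re) * ‖z‖ ^ (-(n:ℤ)) := by
    rw [norm_mul, norm_mul, norm_pow, norm_neg, norm_one, one_pow, one_mul, norm_zpow]
    have hIb := hR z hre hzR
    have : (0:ℝ) ≤ ‖z‖ ^ (-(n:ℤ)) := by positivity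
    calc ‖z‖ ^ (-(n:ℤ)) * ‖I‖ ≤ ‖z‖ ^ (-(n:ℤ)) * (ε * Real.exp (k * z.re)) := by
          exact mul_le_mul_of_nonneg_left hIb this
      _ = ε * Real.exp (k * z.re) * ‖z‖ ^ (-(n:ℤ)) := by ring
  have hS : ‖∑ m ∈ Finset.range n, (-1:ℂ)^m * z ^ (-(m:ℤ) - 1) * ((iteratedDeriv m p 0 : ℝ):ℂ)‖
      ≤ (∑ m ∈ Finset.range n, |iteratedDeriv m p 0|) * ‖z‖⁻¹ := by
    refine le_trans (norm_sum_le _ _) ?_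
    rw [Finset.sum_mul]
    apply Finset.sum_le_sum
    intro m _
    rw [norm_mul, norm_mul, norm_pow, norm_neg, norm_one, one_pow, one_mul, norm_zpow,
      Complex.norm_real, Real.norm_eq_abs]
    have hzp : ‖z‖ ^ (-(m:ℤ) - 1) ≤ ‖z‖⁻¹ := by
      rw [← zpow_neg_one ‖z‖]
      exact zpow_le_zpow_right₀ hz1.le (by omega : -(m:ℤ) - 1 ≤ -1)
    calc ‖z‖ ^ (-(m:ℤ) - 1) * |iteratedDeriv m p 0|
        ≤ ‖z‖⁻¹ * |iteratedDeriv m p 0| := mul_le_mul_of_nonneg_right hzp (abs_nonneg _)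
      _ = |iteratedDeriv m p 0| * ‖z‖⁻¹ := by ring
  calc ‖(-1:ℂ)^n * z ^ (-(n:ℤ)) * I
        - ∑ m ∈ Finset.range n, (-1:ℂ)^m * z ^ (-(m:ℤ) - 1) * ((iteratedDeriv m p 0 : ℝ):ℂ)‖
      ≤ ‖(-1:ℂ)^n * z ^ (-(n:ℤ)) * I‖
        + ‖∑ m ∈ Finset.range n, (-1:ℂ)^m * z ^ (-(m:ℤ) - 1) * ((iteratedDeriv m p 0 : ℝ):ℂ)‖ :=
      norm_sub_le _ _
    _ ≤ ε * Real.exp (k * z.re) * ‖z‖ ^ (-(n:ℤ))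
        + (∑ m ∈ Finset.range n, |iteratedDeriv m p 0|) * ‖z‖⁻¹ := add_le_add hX hS
end
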